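/- arXiv:1810.04568 — 6 statements merged into one kernel-verified Lean document; each statement's English description precedes it below -/
import Mathlib

section
/- Let n > -1 and ν > -(n+1)/2, and let x > 0. Then ∫₀ˣ t^{-ν} L_{ν+n}(t) dt > x^{-ν} L_{ν+n+1}(x) − a_{ν,n} x^{n+2}. -/
open Filter MeasureTheory Topology

/-- The modified Struve function of the first kind. -/
noncomputable def modStruveL (ν x : ℝ) : ℝ :=
  ∑' k : ℕ, (x / 2) ^ (ν + 2 * (k : ℝ) + 1) /
    (Real.Gamma ((k : ℝ) + 3 / 2) * Real.Gamma ((k : ℝ) + ν + 3 / 2))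

/-- The constant `a_{ν,n}`. -/
noncomputable def aConst (ν n : ℝ) : ℝ :=
  (2 * ν + n + 1) /
    (Real.sqrt Real.pi * (2 : ℝ) ^ (ν + n + 2) * (n + 2) * (ν + n + 1) *
      Real.Gamma (ν + n + 5 / 2))

private lemma summable_master (r b : ℝ) (hr : 0 < r) (hb : 0 < b) :
    Summable (fun k : ℕ => r ^ k / (Real.Gamma ((k : ℝ) + 3 / 2) * Real.Gamma ((k : ℝ) + b))) := by
  set f : ℕ → ℝ := fun k => r ^ k / (Real.Gamma ((k : ℝ) + 3 / 2) * Real.Gamma ((k : ℝ) + b))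
    with hf
  have hpos : ∀ k : ℕ, 0 < f k := by
    intro k
    have hk : (0 : ℝ) ≤ (k : ℝ) := Nat.cast_nonneg k
    exact div_pos (pow_pos hr k)
      (mul_pos (Real.Gamma_pos_of_pos (by linarith)) (Real.Gamma_pos_of_pos (by linarith)))
  have hrat : ∀ k : ℕ, ‖f (k + 1)‖ / ‖f k‖ = r / (((k : ℝ) + 3 / 2) * ((k : ℝ) + b)) := by
    intro k
    have hk : (0 : ℝ) ≤ (k : ℝ) := Nat.cast_nonneg k
    have h1 : ((k + 1 : ℕ) : ℝ) + 3 / 2 = ((k : ℝ) + 3 / 2) + 1 := by push_cast; ring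
    have h2 : ((k + 1 : ℕ) : ℝ) + b = ((k : ℝ) + b) + 1 := by push_cast; ring
    have hΓ1 : Real.Gamma ((k : ℝ) + 3 / 2) ≠ 0 :=
      ne_of_gt (Real.Gamma_pos_of_pos (by linarith))
    have hΓ2 : Real.Gamma ((k : ℝ) + b) ≠ 0 :=
      ne_of_gt (Real.Gamma_pos_of_pos (by linarith))
    have hk1 : ((k : ℝ) + 3 / 2) ≠ 0 := by positivity
    have hk2 : ((k : ℝ) + b) ≠ 0 := ne_of_gt (by linarith)
    rw [Real.norm_of_nonneg (hpos _).le, Real.norm_of_nonneg (hpos k).le, hf]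
    simp only [h1, h2, Real.Gamma_add_one hk1, Real.Gamma_add_one hk2, pow_succ]
    field_simp
  have htend : Tendsto (fun k : ℕ => r / (((k : ℝ) + 3 / 2) * ((k : ℝ) + b))) atTop (𝓝 0) := by
    have hc : Tendsto (fun k : ℕ => (k : ℝ)) atTop atTop := tendsto_natCast_atTop_atTop
    have h1 : Tendsto (fun k : ℕ => ((k : ℝ) + 3 / 2) * ((k : ℝ) + b)) atTop atTop :=
      (tendsto_atTop_add_const_right atTop (3 / 2) hc).atTop_mul_atTop₀
        (tendsto_atTop_add_const_right atTop b hc)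
    simpa [div_eq_mul_inv] using h1.inv_tendsto_atTop.const_mul r
  refine summable_of_ratio_test_tendsto_lt_one one_pos
    (Eventually.of_forall fun k => (hpos k).ne') ?_
  exact htend.congr fun k => (hrat k).symm

private lemma modStruveL_repr (ν μ x : ℝ) (hx : 0 < x) :
    x ^ (-ν) * modStruveL μ x =
      ∑' k : ℕ, x ^ (μ - ν + 2 * (k : ℝ) + 1) *
        ((2 : ℝ) ^ (-(μ + 2 * (k : ℝ) + 1)) /
          (Real.Gamma ((k : ℝ) + 3 / 2) * Real.Gamma ((k : ℝ) + μ + 3 / 2))) := by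
  unfold modStruveL
  rw [← tsum_mul_left]
  refine tsum_congr fun k => ?_
  have h2 : (0 : ℝ) ≤ 2 := by norm_num
  have hxe : x ^ (μ - ν + 2 * (k : ℝ) + 1) = x ^ (-ν) * x ^ (μ + 2 * (k : ℝ) + 1) := by
    rw [← Real.rpow_add hx]
    congr 1
    ring
  rw [Real.div_rpow hx.le h2, Real.rpow_neg h2, hxe]
  ring

private noncomputable def cc (ν n : ℝ) (k : ℕ) : ℝ :=
  (2 : ℝ) ^ (-(ν + n + 2 * (k : ℝ) + 1)) /
    (Real.Gamma ((k : ℝ) + 3 / 2) * Real.Gamma ((k : ℝ) + (ν + n) + 3 / 2))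

private noncomputable def II (ν n x : ℝ) (k : ℕ) : ℝ :=
  x ^ (n + 2 * (k : ℝ) + 2) * cc ν n k / (n + 2 * (k : ℝ) + 2)

private noncomputable def JJ (ν n x : ℝ) (k : ℕ) : ℝ :=
  x ^ (n + 2 * (k : ℝ) + 2) * cc ν n k / (2 * ((k : ℝ) + (ν + n) + 3 / 2))

theorem struve_integral_lower_bound_shift (ν n x : ℝ) (hn : n > -1)
    (hν : ν > -((n + 1) / 2)) (hx : x > 0) :
    ∫ t in (0 : ℝ)..x, t ^ (-ν) * modStruveL (ν + n) t >
      x ^ (-ν) * modStruveL (ν + n + 1) x - aConst ν n * x ^ (n + 2) := by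
  have hb : (0 : ℝ) < ν + n + 3 / 2 := by linarith
  have hνn1 : (0 : ℝ) < ν + n + 1 := by linarith
  have h2νn : (0 : ℝ) < 2 * ν + n + 1 := by linarith
  have hn2 : (0 : ℝ) < n + 2 := by linarith
  have hΓ1 : ∀ k : ℕ, 0 < Real.Gamma ((k : ℝ) + 3 / 2) := fun k =>
    Real.Gamma_pos_of_pos (by have := Nat.cast_nonneg (α := ℝ) k; linarith)
  have hΓ2 : ∀ k : ℕ, 0 < Real.Gamma ((k : ℝ) + (ν + n) + 3 / 2) := fun k =>
    Real.Gamma_pos_of_pos (by have := Nat.cast_nonneg (α := ℝ) k; linarith)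
  have hcpos : ∀ k : ℕ, 0 < cc ν n k := fun k =>
    div_pos (Real.rpow_pos_of_pos two_pos _) (mul_pos (hΓ1 k) (hΓ2 k))
  have hden : ∀ k : ℕ, (0 : ℝ) < n + 2 * (k : ℝ) + 2 := fun k => by
    have := Nat.cast_nonneg (α := ℝ) k; linarith
  have hIpos : ∀ k : ℕ, 0 < II ν n x k := fun k =>
    div_pos (mul_pos (Real.rpow_pos_of_pos hx _) (hcpos k)) (hden k)
  have hJpos : ∀ k : ℕ, 0 < JJ ν n x k := fun k =>
    div_pos (mul_pos (Real.rpow_pos_of_pos hx _) (hcpos k))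
      (by have := Nat.cast_nonneg (α := ℝ) k; linarith)
  -- termwise inequality
  have hJI : ∀ k : ℕ, JJ ν n x k ≤ II ν n x k := by
    intro k
    have hk : (0 : ℝ) ≤ (k : ℝ) := Nat.cast_nonneg k
    unfold JJ II
    gcongr
    · exact (mul_pos (Real.rpow_pos_of_pos hx _) (hcpos k)).le
    · exact hden k
    · linarith
  -- summability of II
  have hIsum : Summable (II ν n x) := by
    have hmaster : Summable (fun k : ℕ => (x ^ 2 / 4) ^ k /
        (Real.Gamma ((k : ℝ) + 3 / 2) * Real.Gamma ((k : ℝ) + (ν + n) + 3 / 2))) := by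
      refine (summable_master (x ^ 2 / 4) (ν + n + 3 / 2) (by positivity) hb).congr fun k => ?_
      rw [show (k : ℝ) + (ν + n + 3 / 2) = (k : ℝ) + (ν + n) + 3 / 2 by ring]
    refine Summable.of_nonneg_of_le (fun k => (hIpos k).le) (fun k => ?_)
      ((hmaster.mul_left (x ^ (n + 2) * (2 : ℝ) ^ (-(ν + n + 1)) / (n + 2))))
    have hk : (0 : ℝ) ≤ (k : ℝ) := Nat.cast_nonneg k
    have hxsplit : x ^ (n + 2 * (k : ℝ) + 2) = x ^ (n + 2) * (x ^ 2) ^ k := by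
      rw [show n + 2 * (k : ℝ) + 2 = (n + 2) + (2 * (k : ℝ)) by ring, Real.rpow_add hx]
      congr 1
      rw [show (2 * (k : ℝ)) = ((2 * k : ℕ) : ℝ) by push_cast; ring, Real.rpow_natCast, pow_mul]
    have h2split : (2 : ℝ) ^ (-(ν + n + 2 * (k : ℝ) + 1)) =
        (2 : ℝ) ^ (-(ν + n + 1)) * ((4 : ℝ)⁻¹) ^ k := by
      rw [show -(ν + n + 2 * (k : ℝ) + 1) = -(ν + n + 1) + -(2 * (k : ℝ)) by ring,
        Real.rpow_add two_pos]
      congr 1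
      rw [Real.rpow_neg (by norm_num : (0:ℝ) ≤ 2),
        show (2 * (k : ℝ)) = ((2 * k : ℕ) : ℝ) by push_cast; ring, Real.rpow_natCast, pow_mul,
        inv_pow]
      norm_num
    have hII : II ν n x k = (x ^ (n + 2) * (2 : ℝ) ^ (-(ν + n + 1)) *
        ((x ^ 2 / 4) ^ k /
          (Real.Gamma ((k : ℝ) + 3 / 2) * Real.Gamma ((k : ℝ) + (ν + n) + 3 / 2)))) /
        (n + 2 * (k : ℝ) + 2) := by
      unfold II cc
      rw [hxsplit, h2split, div_pow, inv_pow]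
      ring
    rw [hII, show x ^ (n + 2) * (2 : ℝ) ^ (-(ν + n + 1)) / (n + 2) *
        ((x ^ 2 / 4) ^ k /
          (Real.Gamma ((k : ℝ) + 3 / 2) * Real.Gamma ((k : ℝ) + (ν + n) + 3 / 2))) =
        (x ^ (n + 2) * (2 : ℝ) ^ (-(ν + n + 1)) *
        ((x ^ 2 / 4) ^ k /
          (Real.Gamma ((k : ℝ) + 3 / 2) * Real.Gamma ((k : ℝ) + (ν + n) + 3 / 2)))) / (n + 2)
      from by ring]
    have hA : (0 : ℝ) < x ^ (n + 2) * (2 : ℝ) ^ (-(ν + n + 1)) :=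
      mul_pos (Real.rpow_pos_of_pos hx _) (Real.rpow_pos_of_pos two_pos _)
    have hM : (0 : ℝ) ≤ (x ^ 2 / 4) ^ k /
        (Real.Gamma ((k : ℝ) + 3 / 2) * Real.Gamma ((k : ℝ) + (ν + n) + 3 / 2)) := by
      have := hΓ1 k; have := hΓ2 k; positivity
    gcongr
    exact le_add_of_nonneg_right (by positivity)
  have hJsum : Summable (JJ ν n x) :=
    Summable.of_nonneg_of_le (fun k => (hJpos k).le) hJI hIsum
  -- representation of the RHS as ∑ JJ
  have hJrepr : x ^ (-ν) * modStruveL (ν + n + 1) x = ∑' k, JJ ν n x k := by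
    rw [modStruveL_repr ν (ν + n + 1) x hx]
    refine tsum_congr fun k => ?_
    have hk : (0 : ℝ) ≤ (k : ℝ) := Nat.cast_nonneg k
    have e1 : ν + n + 1 - ν + 2 * (k : ℝ) + 1 = n + 2 * (k : ℝ) + 2 := by ring
    have e2 : -(ν + n + 1 + 2 * (k : ℝ) + 1) = -(ν + n + 2 * (k : ℝ) + 1) + -1 := by ring
    have e3 : (k : ℝ) + (ν + n + 1) + 3 / 2 = ((k : ℝ) + (ν + n) + 3 / 2) + 1 := by ring
    rw [e1, e2, e3, Real.rpow_add two_pos, Real.rpow_neg_one,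
      Real.Gamma_add_one (ne_of_gt (by linarith : (0:ℝ) < (k : ℝ) + (ν + n) + 3 / 2))]
    unfold JJ cc
    generalize ((k : ℝ) + (ν + n) + 3 / 2) = q
    ring
  -- the integrand as a series
  have heq : Set.EqOn (fun t => t ^ (-ν) * modStruveL (ν + n) t)
      (fun t => ∑' k : ℕ, t ^ (n + 2 * (k : ℝ) + 1) * cc ν n k) (Set.Ioc 0 x) := by
    intro t ht
    simp only
    rw [modStruveL_repr ν (ν + n) t ht.1]
    refine tsum_congr fun k => ?_
    rw [show ν + n - ν + 2 * (k : ℝ) + 1 = n + 2 * (k : ℝ) + 1 from by ring]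
    unfold cc
    rfl
  -- integrability and values of termwise integrals
  have hexp : ∀ k : ℕ, (-1 : ℝ) < n + 2 * (k : ℝ) + 1 := fun k => by
    have := Nat.cast_nonneg (α := ℝ) k; linarith
  have hgint : ∀ k : ℕ, IntegrableOn (fun t : ℝ => t ^ (n + 2 * (k : ℝ) + 1) * cc ν n k)
      (Set.Ioc 0 x) volume := fun k =>
    ((intervalIntegral.intervalIntegrable_rpow' (hexp k)).mul_const (cc ν n k)).1
  have hgval : ∀ k : ℕ,
      ∫ t in Set.Ioc (0 : ℝ) x, t ^ (n + 2 * (k : ℝ) + 1) * cc ν n k = II ν n x k := by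
    intro k
    rw [← intervalIntegral.integral_of_le hx.le, intervalIntegral.integral_mul_const,
      integral_rpow (Or.inl (hexp k)),
      Real.zero_rpow (by have := hden k; intro h; rw [show n + 2*(k:ℝ)+1+1 = n+2*(k:ℝ)+2 from by ring] at h; linarith)]
    unfold II
    rw [show n + 2 * (k : ℝ) + 1 + 1 = n + 2 * (k : ℝ) + 2 from by ring]
    ring
  have hnorm : ∀ k : ℕ,
      ∫ t in Set.Ioc (0 : ℝ) x, ‖t ^ (n + 2 * (k : ℝ) + 1) * cc ν n k‖ = II ν n x k := by
    intro k
    rw [← hgval k]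
    refine setIntegral_congr_fun measurableSet_Ioc fun t ht => ?_
    exact Real.norm_of_nonneg (mul_nonneg (Real.rpow_nonneg ht.1.le _) (hcpos k).le)
  have hswap : ∑' k : ℕ, ∫ t in Set.Ioc (0 : ℝ) x, t ^ (n + 2 * (k : ℝ) + 1) * cc ν n k =
      ∫ t in Set.Ioc (0 : ℝ) x, ∑' k : ℕ, t ^ (n + 2 * (k : ℝ) + 1) * cc ν n k :=
    integral_tsum_of_summable_integral_norm hgint
      (hIsum.congr fun k => (hnorm k).symm)
  have hneg : 0 < aConst ν n * x ^ (n + 2) := by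
    have hΓ : 0 < Real.Gamma (ν + n + 5 / 2) := Real.Gamma_pos_of_pos (by linarith)
    have hs : 0 < Real.sqrt Real.pi := Real.sqrt_pos.mpr Real.pi_pos
    have h2p : 0 < (2 : ℝ) ^ (ν + n + 2) := Real.rpow_pos_of_pos two_pos _
    have : 0 < aConst ν n :=
      div_pos h2νn (by positivity)
    exact mul_pos this (Real.rpow_pos_of_pos hx _)
  calc ∫ t in (0:ℝ)..x, t ^ (-ν) * modStruveL (ν + n) t
      = ∫ t in Set.Ioc (0:ℝ) x, t ^ (-ν) * modStruveL (ν + n) t :=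
        intervalIntegral.integral_of_le hx.le
    _ = ∫ t in Set.Ioc (0:ℝ) x, ∑' k : ℕ, t ^ (n + 2 * (k : ℝ) + 1) * cc ν n k :=
        setIntegral_congr_fun measurableSet_Ioc heq
    _ = ∑' k : ℕ, II ν n x k := by rw [← hswap]; exact tsum_congr hgval
    _ ≥ ∑' k : ℕ, JJ ν n x k := Summable.tsum_le_tsum hJI hJsum hIsum
    _ = x ^ (-ν) * modStruveL (ν + n + 1) x := hJrepr.symm
    _ > x ^ (-ν) * modStruveL (ν + n + 1) x - aConst ν n * x ^ (n + 2) := by linarith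
end

section
/- Let n > -1 and ν = -(n+1)/2, and let x > 0. Then ∫₀ˣ t^{-ν} L_{ν+n}(t) dt = x^{-ν} L_{ν+n+1}(x) − a_{ν,n} x^{n+2}, and also ∫₀ˣ t^{-ν} L_{ν+n}(t) dt = (2(ν+n+1)/(n+1)) x^{-ν} L_{ν+n+1}(x) − ((2ν+n+1)/(n+1)) x^{-ν} L_{ν+n+3}(x) + b_{ν,n} x^{n+4} − c_{ν,n} x^{n+2}; that is, equality holds in both the lower and upper bound inequalities when ν = -(n+1)/2. -/
set_option maxHeartbeats 1000000


/-- The constant `b_{ν,n}`. -/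
noncomputable def bConst (ν n : ℝ) : ℝ :=
  ((2 * ν + n + 1) * (2 * ν + n + 3)) /
    (Real.sqrt Real.pi * (2 : ℝ) ^ (ν + n + 4) * (n + 1) * (n + 4) * (ν + n + 3) *
      Real.Gamma (ν + n + 9 / 2))

/-- The constant `c_{ν,n}`. -/
noncomputable def cConst (ν n : ℝ) : ℝ :=
  (2 * ν + n + 1) /
    (Real.sqrt Real.pi * (2 : ℝ) ^ (ν + n + 1) * (n + 1) * (n + 2) *
      Real.Gamma (ν + n + 5 / 2))

open MeasureTheory Real Set Filter

/-- Summability of the Struve series (ratio test). -/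
lemma struve_summable (μ y : ℝ) (hμ : 0 < μ + 3 / 2) (hy : 0 < y) :
    Summable (fun k : ℕ => (y / 2) ^ (μ + 2 * (k : ℝ) + 1) /
      (Real.Gamma ((k : ℝ) + 3 / 2) * Real.Gamma ((k : ℝ) + μ + 3 / 2))) := by
  have hy2 : (0 : ℝ) < y / 2 := by linarith
  set q : ℝ := (y / 2) ^ (2 : ℝ) with hqdef
  have hq : 0 < q := Real.rpow_pos_of_pos hy2 _
  obtain ⟨N, hN⟩ := exists_nat_ge (max (2 * q) (1 - (μ + 3 / 2)))
  apply summable_of_ratio_norm_eventually_le (r := 1 / 2) (by norm_num)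
  filter_upwards [Filter.eventually_ge_atTop N] with k hk
  have hk' : (N : ℝ) ≤ (k : ℝ) := Nat.cast_le.2 hk
  have hk0 : (0 : ℝ) ≤ (k : ℝ) := Nat.cast_nonneg k
  have hΓ1 : 0 < Real.Gamma ((k : ℝ) + 3 / 2) := Real.Gamma_pos_of_pos (by linarith)
  have hΓ2 : 0 < Real.Gamma ((k : ℝ) + μ + 3 / 2) := Real.Gamma_pos_of_pos (by linarith)
  have hpow : 0 < (y / 2) ^ (μ + 2 * (k : ℝ) + 1) := Real.rpow_pos_of_pos hy2 _
  have hc1 : ((k + 1 : ℕ) : ℝ) = (k : ℝ) + 1 := by push_cast; ring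
  rw [hc1]
  have e1 : μ + 2 * ((k : ℝ) + 1) + 1 = (μ + 2 * (k : ℝ) + 1) + 2 := by ring
  have e2 : ((k : ℝ) + 1) + 3 / 2 = ((k : ℝ) + 3 / 2) + 1 := by ring
  have e3 : ((k : ℝ) + 1) + μ + 3 / 2 = ((k : ℝ) + μ + 3 / 2) + 1 := by ring
  rw [e1, e2, e3, Real.Gamma_add_one (by linarith : (k : ℝ) + 3 / 2 ≠ 0),
    Real.Gamma_add_one (by linarith : (k : ℝ) + μ + 3 / 2 ≠ 0),
    Real.rpow_add hy2]
  have hD : (0 : ℝ) < ((k : ℝ) + 3 / 2) * ((k : ℝ) + μ + 3 / 2) := by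
    apply mul_pos <;> linarith
  have hlhs : (0 : ℝ) < (y / 2) ^ (μ + 2 * (k : ℝ) + 1) * (y / 2) ^ (2 : ℝ) /
      (((k : ℝ) + 3 / 2) * Real.Gamma ((k : ℝ) + 3 / 2) *
        (((k : ℝ) + μ + 3 / 2) * Real.Gamma ((k : ℝ) + μ + 3 / 2))) := by
    apply div_pos (mul_pos hpow hq)
    apply mul_pos (mul_pos (by linarith) hΓ1) (mul_pos (by linarith) hΓ2)
  rw [Real.norm_of_nonneg hlhs.le, Real.norm_of_nonneg (div_pos hpow (mul_pos hΓ1 hΓ2)).le]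
  have hsplit : (y / 2) ^ (μ + 2 * (k : ℝ) + 1) * (y / 2) ^ (2 : ℝ) /
      (((k : ℝ) + 3 / 2) * Real.Gamma ((k : ℝ) + 3 / 2) *
        (((k : ℝ) + μ + 3 / 2) * Real.Gamma ((k : ℝ) + μ + 3 / 2))) =
      ((y / 2) ^ (μ + 2 * (k : ℝ) + 1) /
        (Real.Gamma ((k : ℝ) + 3 / 2) * Real.Gamma ((k : ℝ) + μ + 3 / 2))) *
        (q / (((k : ℝ) + 3 / 2) * ((k : ℝ) + μ + 3 / 2))) := by
    rw [hqdef]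
    field_simp
  rw [hsplit, mul_comm ((1:ℝ)/2)]
  apply mul_le_mul_of_nonneg_left _ (div_pos hpow (mul_pos hΓ1 hΓ2)).le
  rw [div_le_iff₀ hD]
  have h2q : 2 * q ≤ (k : ℝ) := le_trans (le_trans (le_max_left _ _) hN) hk'
  have h1 : 1 ≤ (k : ℝ) + μ + 3 / 2 := by
    have := le_trans (le_trans (le_max_right _ _) hN) hk'
    linarith
  have hprod : 2 * q * 1 ≤ ((k : ℝ) + 3 / 2) * ((k : ℝ) + μ + 3 / 2) :=
    mul_le_mul (by linarith) h1 (by norm_num) (by linarith)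
  linarith

/-- Key identity: the integral equals the RHS Struve term, when `ν = -(n+1)/2`. -/
lemma struve_key (ν n x : ℝ) (hn : n > -1) (hν : ν = -((n + 1) / 2)) (hx : 0 < x) :
    ∫ t in (0 : ℝ)..x, t ^ (-ν) * modStruveL (ν + n) t =
      x ^ (-ν) * modStruveL (ν + n + 1) x := by
  have h2ν : 2 * ν + n + 1 = 0 := by rw [hν]; ring
  have hg2 : ∀ k : ℕ, 0 < (k : ℝ) + (ν + n) + 3 / 2 := by
    intro k
    have : (0:ℝ) ≤ (k:ℝ) := Nat.cast_nonneg k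
    rw [hν]; linarith
  set F : ℕ → ℝ → ℝ := fun k t => t ^ (-ν) * ((t / 2) ^ ((ν + n) + 2 * (k : ℝ) + 1) /
    (Real.Gamma ((k : ℝ) + 3 / 2) * Real.Gamma ((k : ℝ) + (ν + n) + 3 / 2))) with hF
  have hΓ1 : ∀ k : ℕ, 0 < Real.Gamma ((k : ℝ) + 3 / 2) := fun k =>
    Real.Gamma_pos_of_pos (by positivity)
  have hΓ2 : ∀ k : ℕ, 0 < Real.Gamma ((k : ℝ) + (ν + n) + 3 / 2) := fun k =>
    Real.Gamma_pos_of_pos (hg2 k)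
  have hp : ∀ k : ℕ, (0 : ℝ) < n + 2 * (k : ℝ) + 1 := by
    intro k
    have : (0:ℝ) ≤ (k:ℝ) := Nat.cast_nonneg k
    linarith
  -- pointwise description of F on (0, x]
  have hFval : ∀ k : ℕ, Set.EqOn
      (fun t => (1 / ((2:ℝ) ^ ((ν + n) + 2 * (k : ℝ) + 1) *
        (Real.Gamma ((k : ℝ) + 3 / 2) * Real.Gamma ((k : ℝ) + (ν + n) + 3 / 2)))) *
        t ^ (n + 2 * (k : ℝ) + 1)) (F k) (Set.Ioc 0 x) := by
    intro k t ht
    have ht0 : 0 < t := ht.1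
    simp only [hF]
    rw [Real.div_rpow ht0.le (by norm_num : (0:ℝ) ≤ 2)]
    rw [show n + 2 * (k : ℝ) + 1 = (-ν) + ((ν + n) + 2 * (k : ℝ) + 1) by ring,
      Real.rpow_add ht0]
    field_simp
  have hIntC : ∀ k : ℕ, IntegrableOn
      (fun t => (1 / ((2:ℝ) ^ ((ν + n) + 2 * (k : ℝ) + 1) *
        (Real.Gamma ((k : ℝ) + 3 / 2) * Real.Gamma ((k : ℝ) + (ν + n) + 3 / 2)))) *
        t ^ (n + 2 * (k : ℝ) + 1)) (Set.Ioc 0 x) := by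
    intro k
    rw [← intervalIntegrable_iff_integrableOn_Ioc_of_le hx.le]
    exact (intervalIntegral.intervalIntegrable_rpow (Or.inl (hp k).le)).const_mul _
  have hInt : ∀ k : ℕ, IntegrableOn (F k) (Set.Ioc 0 x) := fun k =>
    (hIntC k).congr_fun (hFval k) measurableSet_Ioc
  -- value of each integral
  have hIval : ∀ k : ℕ, ∫ t in Set.Ioc (0:ℝ) x, F k t =
      x ^ (-ν) * ((x / 2) ^ ((ν + n + 1) + 2 * (k : ℝ) + 1) /
        (Real.Gamma ((k : ℝ) + 3 / 2) * Real.Gamma ((k : ℝ) + (ν + n + 1) + 3 / 2))) := by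
    intro k
    rw [← setIntegral_congr_fun measurableSet_Ioc (hFval k)]
    rw [MeasureTheory.integral_const_mul]
    rw [← intervalIntegral.integral_of_le hx.le,
      integral_rpow (Or.inl (by linarith [hp k] : (-1:ℝ) < n + 2 * (k : ℝ) + 1))]
    rw [Real.zero_rpow (by linarith [hp k] : n + 2 * (k : ℝ) + 1 + 1 ≠ 0), sub_zero]
    -- now pure algebra
    have hxE' : x ^ ((ν + n + 1) + 2 * (k : ℝ) + 1) =
        x ^ ν * x ^ (n + 2 * (k : ℝ) + 1 + 1) := by
      rw [← Real.rpow_add hx]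
      congr 1
      ring
    have h2E' : (2:ℝ) ^ ((ν + n + 1) + 2 * (k : ℝ) + 1) =
        (2:ℝ) ^ ((ν + n) + 2 * (k : ℝ) + 1) * 2 := by
      rw [show (ν + n + 1) + 2 * (k : ℝ) + 1 = ((ν + n) + 2 * (k : ℝ) + 1) + 1 by ring,
        Real.rpow_add (by norm_num : (0:ℝ) < 2), Real.rpow_one]
    have h2k : (k : ℝ) + (ν + n) + 3 / 2 = (n + 2 * (k : ℝ) + 1 + 1) / 2 := by
      rw [hν]; ring
    rw [show (k : ℝ) + (ν + n + 1) + 3 / 2 = ((k : ℝ) + (ν + n) + 3 / 2) + 1 by ring,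
      Real.Gamma_add_one (hg2 k).ne',
      Real.div_rpow hx.le (by norm_num : (0:ℝ) ≤ 2), hxE', h2E',
      Real.rpow_neg hx.le]
    have hx1 : x ^ ν ≠ 0 := (Real.rpow_pos_of_pos hx _).ne'
    have h2e : ((2:ℝ) ^ ((ν + n) + 2 * (k : ℝ) + 1)) ≠ 0 :=
      (Real.rpow_pos_of_pos (by norm_num) _).ne'
    have hp1 : n + 2 * (k : ℝ) + 1 + 1 ≠ 0 := by linarith [hp k]
    have hG1 : Real.Gamma ((k : ℝ) + 3 / 2) ≠ 0 := (hΓ1 k).ne'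
    have hG2 : Real.Gamma ((k : ℝ) + (ν + n) + 3 / 2) ≠ 0 := (hΓ2 k).ne'
    generalize x ^ (n + 2 * (k : ℝ) + 1 + 1) = P
    generalize hXdef : x ^ ν = X at hx1 ⊢
    generalize (2:ℝ) ^ ((ν + n) + 2 * (k : ℝ) + 1) = T at h2e ⊢
    generalize Real.Gamma ((k : ℝ) + 3 / 2) = G1 at hG1 ⊢
    generalize Real.Gamma ((k : ℝ) + (ν + n) + 3 / 2) = G2 at hG2 ⊢
    rw [h2k]
    field_simp
  -- summability of integral of norms
  have hsum : Summable (fun k : ℕ => x ^ (-ν) * ((x / 2) ^ ((ν + n + 1) + 2 * (k : ℝ) + 1) /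
      (Real.Gamma ((k : ℝ) + 3 / 2) * Real.Gamma ((k : ℝ) + (ν + n + 1) + 3 / 2)))) := by
    apply Summable.mul_left
    apply struve_summable (ν + n + 1) x _ hx
    rw [hν]; linarith
  have hnorm : ∀ k : ℕ, ∫ t in Set.Ioc (0:ℝ) x, ‖F k t‖ = ∫ t in Set.Ioc (0:ℝ) x, F k t := by
    intro k
    apply setIntegral_congr_fun measurableSet_Ioc
    intro t ht
    have ht0 : 0 < t := ht.1
    have : 0 < F k t := by
      simp only [hF]
      have := hΓ1 k; have := hΓ2 k
      positivity
    exact Real.norm_of_nonneg this.le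
  have hsumnorm : Summable (fun k : ℕ => ∫ t in Set.Ioc (0:ℝ) x, ‖F k t‖) := by
    apply hsum.congr
    intro k
    rw [hnorm k, hIval k]
  -- main computation
  rw [intervalIntegral.integral_of_le hx.le]
  have hintegrand : ∀ t : ℝ, t ^ (-ν) * modStruveL (ν + n) t = ∑' k : ℕ, F k t := by
    intro t
    rw [modStruveL, ← tsum_mul_left]
  calc ∫ t in Set.Ioc (0:ℝ) x, t ^ (-ν) * modStruveL (ν + n) t
      = ∫ t in Set.Ioc (0:ℝ) x, ∑' k : ℕ, F k t := by
        exact setIntegral_congr_fun measurableSet_Ioc (fun t _ => hintegrand t)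
    _ = ∑' k : ℕ, ∫ t in Set.Ioc (0:ℝ) x, F k t :=
        (MeasureTheory.integral_tsum_of_summable_integral_norm hInt hsumnorm).symm
    _ = ∑' k : ℕ, x ^ (-ν) * ((x / 2) ^ ((ν + n + 1) + 2 * (k : ℝ) + 1) /
        (Real.Gamma ((k : ℝ) + 3 / 2) * Real.Gamma ((k : ℝ) + (ν + n + 1) + 3 / 2))) :=
        tsum_congr hIval
    _ = x ^ (-ν) * modStruveL (ν + n + 1) x := by rw [tsum_mul_left, modStruveL]

theorem struve_integral_equality_case (ν n x : ℝ) (hn : n > -1)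
    (hν : ν = -((n + 1) / 2)) (hx : x > 0) :
    (∫ t in (0 : ℝ)..x, t ^ (-ν) * modStruveL (ν + n) t =
      x ^ (-ν) * modStruveL (ν + n + 1) x - aConst ν n * x ^ (n + 2)) ∧
    (∫ t in (0 : ℝ)..x, t ^ (-ν) * modStruveL (ν + n) t =
      (2 * (ν + n + 1) / (n + 1)) * (x ^ (-ν) * modStruveL (ν + n + 1) x) -
        ((2 * ν + n + 1) / (n + 1)) * (x ^ (-ν) * modStruveL (ν + n + 3) x) +
        bConst ν n * x ^ (n + 4) - cConst ν n * x ^ (n + 2)) := by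
  have h2ν : 2 * ν + n + 1 = 0 := by rw [hν]; ring
  have hkey := struve_key ν n x hn hν hx
  have ha : aConst ν n = 0 := by rw [aConst, h2ν, zero_div]
  have hb : bConst ν n = 0 := by rw [bConst, h2ν, zero_mul, zero_div]
  have hc : cConst ν n = 0 := by rw [cConst, h2ν, zero_div]
  have hn1 : n + 1 ≠ 0 := by linarith
  have hcoef : 2 * (ν + n + 1) / (n + 1) = 1 := by
    rw [hν]; field_simp; ring
  constructor
  · rw [hkey, ha]; ring
  · rw [hkey, hb, hc, hcoef, h2ν]; ring
end

section
/- Let n > -1 and ν > -(n+1)/2, and let D > 0 be a constant such that for all x > 0, ∫₀ˣ t^{-ν} L_{ν+n}(t) dt ≤ D · x^{-ν} L_{ν+n}(x). Suppose 0 < γ < 1/D. Then for all x > 0, ∫₀ˣ e^{-γt} t^{-ν} L_{ν+n}(t) dt < (e^{-γx} / (1 − Dγ)) ∫₀ˣ t^{-ν} L_{ν+n}(t) dt. -/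
open Real Set

namespace StruveAux


noncomputable def gS (a u : ℝ) : ℝ :=
  ∑' k : ℕ, u ^ k / (Real.Gamma ((k : ℝ) + 3 / 2) * Real.Gamma ((k : ℝ) + a))

lemma denom_pos {a : ℝ} (ha : 0 < a) (k : ℕ) :
    0 < Real.Gamma ((k : ℝ) + 3 / 2) * Real.Gamma ((k : ℝ) + a) :=
  mul_pos (Real.Gamma_pos_of_pos (by positivity)) (Real.Gamma_pos_of_pos (by positivity))

lemma summable_gS {a : ℝ} (ha : 0 < a) (u : ℝ) :
    Summable (fun k : ℕ => u ^ k / (Real.Gamma ((k : ℝ) + 3 / 2) * Real.Gamma ((k : ℝ) + a))) := by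
  apply summable_of_ratio_norm_eventually_le (r := 1/2) (by norm_num)
  filter_upwards [Filter.eventually_ge_atTop (⌈2 * |u|⌉₊)] with k hk
  have hk' : 2 * |u| ≤ (k : ℝ) := le_trans (Nat.le_ceil _) (by exact_mod_cast hk)
  have h32 : ((k : ℝ) + 3 / 2) ≠ 0 := by positivity
  have hka : ((k : ℝ) + a) ≠ 0 := by positivity
  have e1 : Real.Gamma (((k+1 : ℕ) : ℝ) + 3 / 2)
      = ((k : ℝ) + 3 / 2) * Real.Gamma ((k : ℝ) + 3 / 2) := by
    rw [show (((k+1 : ℕ) : ℝ) + 3 / 2) = ((k : ℝ) + 3 / 2) + 1 by push_cast; ring,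
      Real.Gamma_add_one h32]
  have e2 : Real.Gamma (((k+1 : ℕ) : ℝ) + a)
      = ((k : ℝ) + a) * Real.Gamma ((k : ℝ) + a) := by
    rw [show (((k+1 : ℕ) : ℝ) + a) = ((k : ℝ) + a) + 1 by push_cast; ring,
      Real.Gamma_add_one hka]
  have hd1 : 0 < Real.Gamma ((k : ℝ) + 3 / 2) := Real.Gamma_pos_of_pos (by positivity)
  have hd2 : 0 < Real.Gamma ((k : ℝ) + a) := Real.Gamma_pos_of_pos (by positivity)
  rw [e1, e2]
  have hP : 2 * |u| ≤ ((k : ℝ) + 3 / 2) * ((k : ℝ) + a) := by nlinarith [abs_nonneg u]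
  have hPpos : 0 < ((k : ℝ) + 3 / 2) * ((k : ℝ) + a) := by positivity
  rw [Real.norm_eq_abs, Real.norm_eq_abs, abs_div, abs_div, abs_pow, abs_pow,
    abs_of_pos (mul_pos (mul_pos (by positivity) hd1) (mul_pos (by positivity) hd2)),
    abs_of_pos (mul_pos hd1 hd2)]
  have key : |u| ^ (k + 1) / (((k : ℝ) + 3 / 2) * Real.Gamma ((k : ℝ) + 3 / 2) *
      (((k : ℝ) + a) * Real.Gamma ((k : ℝ) + a)))
      = (|u| / (((k : ℝ) + 3 / 2) * ((k : ℝ) + a))) *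
        (|u| ^ k / (Real.Gamma ((k : ℝ) + 3 / 2) * Real.Gamma ((k : ℝ) + a))) := by
    rw [pow_succ]; field_simp
  rw [key]
  apply mul_le_mul_of_nonneg_right _ (by positivity)
  rw [div_le_iff₀ hPpos]; linarith

lemma gS_pos {a : ℝ} (ha : 0 < a) {u : ℝ} (hu : 0 ≤ u) : 0 < gS a u := by
  apply Summable.tsum_pos (summable_gS ha u) (fun k => by positivity) 0
  have := denom_pos ha 0
  positivity

lemma gS_mono {a : ℝ} (ha : 0 < a) {u v : ℝ} (hu : 0 ≤ u) (huv : u ≤ v) :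
    gS a u ≤ gS a v := by
  apply Summable.tsum_le_tsum _ (summable_gS ha u) (summable_gS ha v)
  intro k
  exact div_le_div_of_nonneg_right (pow_le_pow_left₀ hu huv k) (denom_pos ha k).le

lemma gS_cont {a : ℝ} (ha : 0 < a) : Continuous (gS a) := by
  rw [continuous_iff_continuousAt]
  intro u0
  have hR : ContinuousOn (gS a) (Set.Icc (-(|u0| + 1)) (|u0| + 1)) := by
    apply continuousOn_tsum (u := fun k : ℕ => (|u0| + 1) ^ k /
        (Real.Gamma ((k : ℝ) + 3 / 2) * Real.Gamma ((k : ℝ) + a)))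
      (fun k => ((continuous_pow k).div_const _).continuousOn) (summable_gS ha _)
    intro k y hy
    have hyabs : |y| ≤ |u0| + 1 := abs_le.2 ⟨hy.1, hy.2⟩
    rw [Real.norm_eq_abs, abs_div, abs_pow, abs_of_pos (denom_pos ha k)]
    exact div_le_div_of_nonneg_right (pow_le_pow_left₀ (abs_nonneg y) hyabs k) (denom_pos ha k).le
  exact hR.continuousAt (Icc_mem_nhds (by linarith [neg_abs_le u0]) (by linarith [le_abs_self u0]))


lemma modStruveL_eq {ν' t : ℝ} (ht : 0 < t) :
    modStruveL ν' t = (t / 2) ^ (ν' + 1) * gS (ν' + 3 / 2) ((t / 2) ^ 2) := by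
  unfold modStruveL gS
  rw [← tsum_mul_left]
  congr 1
  ext k
  have h2 : (0 : ℝ) < t / 2 := by linarith
  rw [show ν' + 2 * (k : ℝ) + 1 = (ν' + 1) + ((2 * k : ℕ) : ℝ) by push_cast; ring,
    Real.rpow_add h2, Real.rpow_natCast, pow_mul,
    show (k : ℝ) + ν' + 3 / 2 = (k : ℝ) + (ν' + 3 / 2) by ring]
  ring

lemma modStruveL_zero {ν' : ℝ} (h : 0 < ν' + 1) : modStruveL ν' 0 = 0 := by
  unfold modStruveL
  have : ∀ k : ℕ, ((0 : ℝ) / 2) ^ (ν' + 2 * (k : ℝ) + 1) /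
      (Real.Gamma ((k : ℝ) + 3 / 2) * Real.Gamma ((k : ℝ) + ν' + 3 / 2)) = 0 := by
    intro k
    have hk : (0:ℝ) ≤ 2 * (k : ℝ) := by positivity
    rw [zero_div, Real.zero_rpow (by linarith : ν' + 2 * (k : ℝ) + 1 ≠ 0) , zero_div]
  calc (∑' k : ℕ, ((0 : ℝ) / 2) ^ (ν' + 2 * (k : ℝ) + 1) /
      (Real.Gamma ((k : ℝ) + 3 / 2) * Real.Gamma ((k : ℝ) + ν' + 3 / 2)))
      = ∑' _ : ℕ, (0:ℝ) := tsum_congr this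
    _ = 0 := tsum_zero


end StruveAux

open StruveAux

theorem struve_exp_integral_upper_bound_one (ν n D γ : ℝ) (hn : n > -1)
    (hν : ν > -((n + 1) / 2)) (hD : D > 0)
    (hbound : ∀ x > (0 : ℝ), ∫ t in (0 : ℝ)..x, t ^ (-ν) * modStruveL (ν + n) t ≤
      D * (x ^ (-ν) * modStruveL (ν + n) x))
    (hγ1 : 0 < γ) (hγ2 : γ < 1 / D) (x : ℝ) (hx : x > 0) :
    ∫ t in (0 : ℝ)..x, Real.exp (-γ * t) * (t ^ (-ν) * modStruveL (ν + n) t) <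
      (Real.exp (-γ * x) / (1 - D * γ)) *
        ∫ t in (0 : ℝ)..x, t ^ (-ν) * modStruveL (ν + n) t := by
  have ha : (0 : ℝ) < ν + n + 3 / 2 := by linarith
  have hn1 : (0 : ℝ) < n + 1 := by linarith
  set a : ℝ := ν + n + 3 / 2 with ha_def
  set C : ℝ := (1 / 2 : ℝ) ^ (ν + n + 1) with hC_def
  have hCpos : 0 < C := Real.rpow_pos_of_pos (by norm_num) _
  have hec : Continuous fun t : ℝ => Real.exp (-γ * t) :=
    Real.continuous_exp.comp (continuous_const.mul continuous_id)
  set h : ℝ → ℝ := fun t => t ^ (n + 1) * (C * gS a (t ^ 2 / 4)) with hh_def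
  have hgc : Continuous (gS a) := gS_cont ha
  have hcont : Continuous h := by
    apply Continuous.mul _ (continuous_const.mul (hgc.comp ((continuous_pow 2).div_const 4)))
    rw [continuous_iff_continuousAt]
    intro t
    exact Real.continuousAt_rpow_const t (n + 1) (Or.inr hn1.le)
  have heq : ∀ t : ℝ, 0 ≤ t → t ^ (-ν) * modStruveL (ν + n) t = h t := by
    intro t ht
    rcases eq_or_lt_of_le ht with h0 | h0
    · rw [← h0, hh_def]
      simp only
      rw [modStruveL_zero (by linarith : (0:ℝ) < (ν + n) + 1), mul_zero,
        Real.zero_rpow hn1.ne', zero_mul]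
    · rw [modStruveL_eq h0, hh_def]
      simp only
      have h2 : (0 : ℝ) < t / 2 := by linarith
      have e1 : (t / 2 : ℝ) ^ ((ν + n) + 1) = t ^ (ν + n + 1) * C := by
        rw [hC_def, show (t / 2 : ℝ) = t * (1 / 2) by ring,
          Real.mul_rpow ht (by norm_num)]
      have e2 : ((t / 2 : ℝ) ^ 2) = t ^ 2 / 4 := by ring
      have e3 : t ^ (-ν) * t ^ (ν + n + 1) = t ^ (n + 1) := by
        rw [← Real.rpow_add h0]
        congr 1
        ring
      rw [e1, e2]
      calc t ^ (-ν) * (t ^ (ν + n + 1) * C * gS a (t ^ 2 / 4))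
          = t ^ (-ν) * t ^ (ν + n + 1) * (C * gS a (t ^ 2 / 4)) := by ring
        _ = t ^ (n + 1) * (C * gS a (t ^ 2 / 4)) := by rw [e3]
  have hmono : ∀ s t : ℝ, 0 ≤ s → s ≤ t → h s ≤ h t := by
    intro s t hs hst
    have hgs : 0 < gS a (s ^ 2 / 4) := gS_pos ha (by positivity)
    apply mul_le_mul (Real.rpow_le_rpow hs hst hn1.le)
      (mul_le_mul_of_nonneg_left (gS_mono ha (by positivity) (by nlinarith)) hCpos.le)
      (by positivity) (Real.rpow_nonneg (hs.trans hst) _)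
  have hpos : ∀ t : ℝ, 0 < t → 0 < h t := fun t ht =>
    mul_pos (Real.rpow_pos_of_pos ht _) (mul_pos hCpos (gS_pos ha (by positivity)))
  have huIcc : Set.uIcc (0 : ℝ) x = Set.Icc 0 x := Set.uIcc_of_le hx.le
  have e1 : (∫ t in (0 : ℝ)..x, Real.exp (-γ * t) * (t ^ (-ν) * modStruveL (ν + n) t))
      = ∫ t in (0 : ℝ)..x, Real.exp (-γ * t) * h t := by
    apply intervalIntegral.integral_congr
    intro t ht
    rw [huIcc] at ht
    simp only [heq t ht.1]
  have e2 : (∫ t in (0 : ℝ)..x, t ^ (-ν) * modStruveL (ν + n) t)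
      = ∫ t in (0 : ℝ)..x, h t := by
    apply intervalIntegral.integral_congr
    intro t ht
    rw [huIcc] at ht
    exact heq t ht.1
  rw [e1, e2]
  have hbound' : ∀ y : ℝ, 0 < y → (∫ t in (0 : ℝ)..y, h t) ≤ D * h y := by
    intro y hy
    have hb := hbound y hy
    have ey : (∫ t in (0 : ℝ)..y, t ^ (-ν) * modStruveL (ν + n) t)
        = ∫ t in (0 : ℝ)..y, h t := by
      apply intervalIntegral.integral_congr
      intro t ht
      rw [Set.uIcc_of_le hy.le] at ht
      exact heq t ht.1
    rwa [ey, heq y hy.le] at hb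
  set F : ℝ → ℝ := fun t => ∫ s in (0 : ℝ)..t, h s with hF_def
  have hFderiv : ∀ t : ℝ, HasDerivAt F (h t) t := fun t =>
    (hcont.integral_hasStrictDerivAt 0 t).hasDerivAt
  have hFcont : Continuous F := by
    rw [continuous_iff_continuousAt]
    exact fun t => (hFderiv t).continuousAt
  have hexp : ∀ t : ℝ, HasDerivAt (fun s => Real.exp (-γ * s)) (-γ * Real.exp (-γ * t)) t := by
    intro t
    have h1 : HasDerivAt (fun s : ℝ => -γ * s) (-γ) t := by
      simpa using (hasDerivAt_id t).const_mul (-γ)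
    have h2 := h1.exp
    convert h2 using 1
    ring
  have hibp : (∫ t in (0 : ℝ)..x, Real.exp (-γ * t) * h t)
      = Real.exp (-γ * x) * F x - Real.exp (-γ * 0) * F 0
        - ∫ t in (0 : ℝ)..x, (-γ * Real.exp (-γ * t)) * F t :=
    intervalIntegral.integral_mul_deriv_eq_deriv_mul
      (fun t _ => hexp t) (fun t _ => hFderiv t)
      ((continuous_const.mul hec).intervalIntegrable 0 x)
      (hcont.intervalIntegrable 0 x)
  have hF0 : F 0 = 0 := intervalIntegral.integral_same
  have hpull : (∫ t in (0 : ℝ)..x, (-γ * Real.exp (-γ * t)) * F t)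
      = -γ * ∫ t in (0 : ℝ)..x, Real.exp (-γ * t) * F t := by
    rw [← intervalIntegral.integral_const_mul]
    congr 1
    ext t
    ring
  have key : (∫ t in (0 : ℝ)..x, Real.exp (-γ * t) * h t)
      = Real.exp (-γ * x) * F x + γ * ∫ t in (0 : ℝ)..x, Real.exp (-γ * t) * F t := by
    rw [hibp, hF0, hpull]
    ring
  -- strict comparison point
  set t₀ : ℝ := min D x / 2 with ht₀_def
  have hminpos : 0 < min D x := lt_min hD hx
  have ht₀pos : 0 < t₀ := by positivity
  have ht₀x : t₀ < x := by
    have : min D x ≤ x := min_le_right _ _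
    rw [ht₀_def]; linarith
  have ht₀D : t₀ < D := by
    have : min D x ≤ D := min_le_left _ _
    rw [ht₀_def]; linarith
  have hFt₀ : F t₀ < D * h t₀ := by
    have h1 : F t₀ ≤ t₀ * h t₀ := by
      have := intervalIntegral.integral_mono_on ht₀pos.le
        (hcont.intervalIntegrable 0 t₀) ((intervalIntegrable_const : IntervalIntegrable (fun _ => h t₀) MeasureTheory.volume 0 t₀))
        (fun s hs => hmono s t₀ hs.1 hs.2)
      rw [intervalIntegral.integral_const, smul_eq_mul, sub_zero] at this
      exact this
    nlinarith [hpos t₀ ht₀pos]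
  have hstrict : (∫ t in (0 : ℝ)..x, Real.exp (-γ * t) * F t)
      < ∫ t in (0 : ℝ)..x, Real.exp (-γ * t) * (D * h t) := by
    apply intervalIntegral.integral_lt_integral_of_continuousOn_of_le_of_exists_lt hx
    · exact (hec.mul hFcont).continuousOn
    · exact (hec.mul (continuous_const.mul hcont)).continuousOn
    · intro t ht
      exact mul_le_mul_of_nonneg_left (hbound' t ht.1) (Real.exp_nonneg _)
    · exact ⟨t₀, ⟨ht₀pos.le, ht₀x.le⟩,
        mul_lt_mul_of_pos_left hFt₀ (Real.exp_pos _)⟩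
  have hpull2 : (∫ t in (0 : ℝ)..x, Real.exp (-γ * t) * (D * h t))
      = D * ∫ t in (0 : ℝ)..x, Real.exp (-γ * t) * h t := by
    rw [← intervalIntegral.integral_const_mul]
    congr 1
    ext t
    ring
  rw [hpull2] at hstrict
  have hDγ : D * γ < 1 := by
    have := (lt_div_iff₀ hD).1 hγ2
    nlinarith
  have hI : (∫ t in (0 : ℝ)..x, Real.exp (-γ * t) * h t)
      < Real.exp (-γ * x) * F x
        + γ * (D * ∫ t in (0 : ℝ)..x, Real.exp (-γ * t) * h t) := by
    have h3 := mul_lt_mul_of_pos_left hstrict hγ1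
    linarith [key]
  rw [div_mul_eq_mul_div, lt_div_iff₀ (by linarith : (0:ℝ) < 1 - D * γ)]
  nlinarith [hI]
end

section
/- Let ν > -3/2. Then the ratio ( x^{-ν} L_ν(x) − x/(√π · 2^ν · Γ(ν + 3/2)) ) / ( ∫₀ˣ t^{-ν} L_ν(t) dt ) tends to 1 as x → ∞; that is, the lower bound x^{-ν} L_ν(x) − x/(√π · 2^ν · Γ(ν+3/2)) for the integral ∫₀ˣ t^{-ν} L_ν(t) dt is tight as x → ∞. -/
set_option maxHeartbeats 1000000

open Real Filter MeasureTheory intervalIntegral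
open scoped Topology

namespace StruveTight

noncomputable def c (ν : ℝ) (k : ℕ) : ℝ :=
  (1 / 2 : ℝ) ^ (ν + 2 * (k : ℝ) + 1) /
    (Real.Gamma ((k : ℝ) + 3 / 2) * Real.Gamma ((k : ℝ) + ν + 3 / 2))

variable {ν : ℝ}

lemma arg1_pos (k : ℕ) : (0:ℝ) < (k:ℝ) + 3/2 := by positivity

lemma arg2_pos (hν : ν > -(3/2)) (k : ℕ) : (0:ℝ) < (k:ℝ) + ν + 3/2 := by
  have := Nat.cast_nonneg (α := ℝ) k; linarith

lemma c_pos (hν : ν > -(3/2)) (k : ℕ) : 0 < c ν k := by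
  exact div_pos (rpow_pos_of_pos (by norm_num) _)
    (mul_pos (Gamma_pos_of_pos (arg1_pos k)) (Gamma_pos_of_pos (arg2_pos hν k)))

lemma c_succ (hν : ν > -(3/2)) (k : ℕ) :
    c ν (k+1) = c ν k / ((2*(k:ℝ)+3) * (2*(k:ℝ)+2*ν+3)) := by
  have h1 := arg1_pos k
  have h2 := arg2_pos hν k
  have hG1 := Gamma_pos_of_pos h1
  have hG2 := Gamma_pos_of_pos h2
  have e1 : ((k+1 : ℕ):ℝ) + 3/2 = ((k:ℝ) + 3/2) + 1 := by push_cast; ring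
  have e2 : ((k+1 : ℕ):ℝ) + ν + 3/2 = ((k:ℝ) + ν + 3/2) + 1 := by push_cast; ring
  have e3 : ν + 2 * ((k+1:ℕ):ℝ) + 1 = (ν + 2*(k:ℝ) + 1) + 2 := by push_cast; ring
  have hrw : (1/2:ℝ) ^ ((ν + 2*(k:ℝ) + 1) + 2) = (1/2:ℝ) ^ (ν + 2*(k:ℝ) + 1) * (1/4) := by
    rw [rpow_add (by norm_num : (0:ℝ) < 1/2)]
    norm_num
  unfold c
  rw [e1, e2, e3, hrw, Gamma_add_one h1.ne', Gamma_add_one h2.ne', div_div]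
  have hq : (0:ℝ) < (2*(k:ℝ)+3) * (2*(k:ℝ)+2*ν+3) := by nlinarith [arg2_pos hν k, arg1_pos k]
  rw [div_eq_div_iff (by positivity) (by positivity)]
  ring
lemma P_pos (hν : ν > -(3/2)) (k : ℕ) : (0:ℝ) < (2*(k:ℝ)+3) * (2*(k:ℝ)+2*ν+3) := by
  have := arg2_pos hν k; have := Nat.cast_nonneg (α := ℝ) k; nlinarith

lemma summable_master (hν : ν > -(3/2)) (x : ℝ) : Summable (fun k => c ν k * x ^ k) := by
  rcases eq_or_ne x 0 with rfl | hx
  · apply summable_of_ne_finset_zero (s := {0})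
    intro k hk
    simp only [Finset.mem_singleton] at hk
    simp [zero_pow hk]
  · have hprod : Tendsto (fun k : ℕ => (2*(k:ℝ)+3) * (2*(k:ℝ)+2*ν+3)) atTop atTop := by
      apply Filter.Tendsto.atTop_mul_atTop₀
      · exact tendsto_atTop_add_const_right _ 3
          (Filter.Tendsto.const_mul_atTop two_pos tendsto_natCast_atTop_atTop)
      · have := tendsto_atTop_add_const_right atTop (2*ν+3)
          (Filter.Tendsto.const_mul_atTop two_pos (tendsto_natCast_atTop_atTop (R := ℝ)))
        apply this.congr; intro k; ring
    have hg : Tendsto (fun k : ℕ => |x| / ((2*(k:ℝ)+3) * (2*(k:ℝ)+2*ν+3))) atTop (𝓝 0) := by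
      simpa [div_eq_mul_inv] using hprod.inv_tendsto_atTop.const_mul |x|
    apply summable_of_ratio_test_tendsto_lt_one one_pos
    · filter_upwards with k
      exact mul_ne_zero (c_pos hν k).ne' (pow_ne_zero _ hx)
    · apply hg.congr
      intro k
      have hP := P_pos hν k
      have hck := c_pos hν k
      rw [norm_mul, norm_mul, norm_pow, norm_pow, Real.norm_eq_abs (c ν (k+1)),
        Real.norm_eq_abs (c ν k), Real.norm_eq_abs x, abs_of_pos (c_pos hν (k+1)),
        abs_of_pos hck, c_succ hν k, pow_succ]
      rw [eq_div_iff (by positivity)]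
      field_simp
  


lemma summable_shift (hν : ν > -(3/2)) (x : ℝ) (m : ℕ) (hm : 2 ≤ m) (D : ℕ → ℝ)
    (hD : ∀ k, 1 ≤ D k) :
    Summable (fun k => c ν (k+1) * x ^ (2*k+m) / D k) := by
  have hs : Summable (fun k => c ν (k+1) * (x^2) ^ (k+1) * |x| ^ (m-2)) :=
    ((summable_nat_add_iff 1).mpr (summable_master hν (x^2))).mul_right _
  apply Summable.of_norm_bounded hs
  intro k
  have hck := c_pos hν (k+1)
  have hDk := hD k
  have e : c ν (k+1) * (x^2) ^ (k+1) * |x| ^ (m-2) = c ν (k+1) * |x| ^ (2*k+m) := by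
    rw [← sq_abs, ← pow_mul, mul_assoc, ← pow_add]
    have : 2*(k+1)+(m-2) = 2*k+m := by omega
    rw [this]
  rw [e, Real.norm_eq_abs, abs_div, abs_mul, abs_pow, abs_of_pos hck,
    abs_of_pos (lt_of_lt_of_le one_pos hDk)]
  exact div_le_self (by positivity) hDk

lemma summable_odd (hν : ν > -(3/2)) (x : ℝ) : Summable (fun k => c ν k * x ^ (2*k+1)) := by
  apply ((summable_master hν (x^2)).mul_right x).congr
  intro k
  ring

noncomputable def N (ν : ℝ) (x : ℝ) : ℝ := ∑' k, c ν (k+1) * x ^ (2*k+3)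

lemma summable_N (hν : ν > -(3/2)) (x : ℝ) :
    Summable (fun k => c ν (k+1) * x ^ (2*k+3)) := by
  have := summable_shift hν x 3 (by norm_num) (fun _ => 1) (fun _ => le_refl 1)
  simpa using this

lemma continuous_N (hν : ν > -(3/2)) : Continuous (N ν) := by
  rw [continuous_iff_continuousAt]
  intro x
  set R := |x| + 1 with hRdef
  have hR : (0:ℝ) < R := by positivity
  have hcont : ContinuousOn (N ν) (Set.Icc (-R) R) := by
    apply continuousOn_tsum
      (fun k => (continuous_const.mul (continuous_pow _)).continuousOn)
      (summable_N hν R)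
    intro k t ht
    simp only [Real.norm_eq_abs, Pi.mul_apply]; rw [abs_mul, abs_of_pos (c_pos hν _), abs_pow]
    gcongr
    · exact (c_pos hν _).le
    · exact abs_le.mpr ⟨ht.1, ht.2⟩
  exact hcont.continuousAt (Icc_mem_nhds (by simp [hRdef]; linarith [neg_abs_le x])
    (by simp [hRdef]; linarith [le_abs_self x]))


noncomputable def A (ν : ℝ) (x : ℝ) : ℝ := ∫ t in (0:ℝ)..x, N ν t
noncomputable def B (ν : ℝ) (x : ℝ) : ℝ := ∫ t in (0:ℝ)..x, A ν t

lemma hasDerivAt_A (hν : ν > -(3/2)) (x : ℝ) : HasDerivAt (A ν) (N ν x) x :=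
  ((continuous_N hν).integral_hasStrictDerivAt 0 x).hasDerivAt

lemma continuous_A (hν : ν > -(3/2)) : Continuous (A ν) :=
  continuous_iff_continuousAt.mpr fun x => (hasDerivAt_A hν x).continuousAt

lemma hasDerivAt_B (hν : ν > -(3/2)) (x : ℝ) : HasDerivAt (B ν) (A ν x) x :=
  ((continuous_A hν).integral_hasStrictDerivAt 0 x).hasDerivAt

lemma continuous_B (hν : ν > -(3/2)) : Continuous (B ν) :=
  continuous_iff_continuousAt.mpr fun x => (hasDerivAt_B hν x).continuousAt

/-- Generic interchange: integral over `Ioc 0 x` of a series of monomial-type terms. -/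
lemma interchange (hν : ν > -(3/2)) {x : ℝ} (hx : 0 ≤ x) (m : ℕ) (hm : 2 ≤ m) (D : ℕ → ℝ)
    (hD : ∀ k, 1 ≤ D k) :
    ∫ t in Set.Ioc (0:ℝ) x, (∑' k, c ν (k+1) * t ^ (2*k+m) / D k) =
      ∑' k, c ν (k+1) * x ^ (2*k+m+1) / (D k * (2*(k:ℝ)+(m:ℝ)+1)) := by
  have hFc : ∀ k : ℕ, Continuous (fun t : ℝ => c ν (k+1) * t ^ (2*k+m) / D k) :=
    fun k => (continuous_const.mul (continuous_pow _)).div_const _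
  have hFint : ∀ k : ℕ, IntegrableOn (fun t : ℝ => c ν (k+1) * t ^ (2*k+m) / D k)
      (Set.Ioc 0 x) := fun k => (hFc k).integrableOn_Ioc
  have hnorm : Summable
      (fun k : ℕ => ∫ t in Set.Ioc (0:ℝ) x, ‖c ν (k+1) * t ^ (2*k+m) / D k‖) := by
    have hb : Summable (fun k : ℕ => c ν (k+1) * x ^ (2*k+m) / D k * x) :=
      (summable_shift hν x m hm D hD).mul_right x
    apply Summable.of_nonneg_of_le (fun k => integral_nonneg fun t => norm_nonneg _) _ hb
    intro k
    have hDk := hD k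
    have hC : ∀ t ∈ Set.Ioc (0:ℝ) x,
        ‖‖c ν (k+1) * t ^ (2*k+m) / D k‖‖ ≤ c ν (k+1) * x ^ (2*k+m) / D k := by
      intro t ht
      rw [norm_norm, Real.norm_eq_abs, abs_div, abs_mul, abs_of_pos (c_pos hν _), abs_pow,
        abs_of_pos (lt_of_lt_of_le one_pos hDk)]
      gcongr
      · exact (c_pos hν _).le
      · rw [abs_of_pos ht.1]; exact ht.2
    have hmeas : AEStronglyMeasurable (fun t : ℝ => ‖c ν (k+1) * t ^ (2*k+m) / D k‖)
        ((volume : Measure ℝ).restrict (Set.Ioc 0 x)) := ((hFc k).norm).aestronglyMeasurable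
    have := MeasureTheory.norm_setIntegral_le_of_norm_le_const
      (μ := volume) (s := Set.Ioc (0:ℝ) x) (f := fun t => ‖c ν (k+1) * t ^ (2*k+m) / D k‖)
      measure_Ioc_lt_top hC
    rw [Real.norm_eq_abs, abs_of_nonneg (integral_nonneg fun t => norm_nonneg _)] at this
    refine this.trans ?_
    rw [Real.volume_real_Ioc_of_le hx]
    simp
  rw [← MeasureTheory.integral_tsum_of_summable_integral_norm hFint hnorm]
  apply tsum_congr
  intro k
  rw [← intervalIntegral.integral_of_le hx]
  have : (fun t : ℝ => c ν (k+1) * t ^ (2*k+m) / D k)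
      = fun t : ℝ => (c ν (k+1) / D k) * t ^ (2*k+m) := by funext t; ring
  rw [this, intervalIntegral.integral_const_mul, integral_pow]
  rw [zero_pow (by omega), sub_zero]
  have hcast : ((2*k+m : ℕ) : ℝ) + 1 = 2*(k:ℝ)+(m:ℝ)+1 := by push_cast; ring
  rw [hcast]
  field_simp

lemma A_eq (hν : ν > -(3/2)) {x : ℝ} (hx : 0 ≤ x) :
    A ν x = ∑' k, c ν (k+1) * x ^ (2*k+4) / (2*(k:ℝ)+4) := by
  have h := interchange hν hx 3 (by norm_num) (fun _ => 1) (fun _ => le_refl 1)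
  rw [A, intervalIntegral.integral_of_le hx]
  simp only [N, div_one] at h ⊢
  rw [h]
  apply tsum_congr
  intro k
  norm_num
  rw [show 2*k+3+1 = 2*k+4 from rfl]
  ring_nf

lemma B_eq (hν : ν > -(3/2)) {x : ℝ} (hx : 0 ≤ x) :
    B ν x = ∑' k, c ν (k+1) * x ^ (2*k+5) / ((2*(k:ℝ)+4) * (2*(k:ℝ)+5)) := by
  have hD : ∀ k : ℕ, (1:ℝ) ≤ 2*(k:ℝ)+4 := by
    intro k; have := Nat.cast_nonneg (α := ℝ) k; linarith
  have h := interchange hν hx 4 (by norm_num) (fun k => 2*(k:ℝ)+4) hD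
  rw [B, intervalIntegral.integral_of_le hx]
  have heq : Set.EqOn (A ν) (fun t => ∑' k, c ν (k+1) * t ^ (2*k+4) / (2*(k:ℝ)+4))
      (Set.Ioc 0 x) := fun t ht => A_eq hν ht.1.le
  rw [MeasureTheory.setIntegral_congr_fun measurableSet_Ioc heq, h]
  apply tsum_congr
  intro k
  norm_num
  rw [show 2*k+4+1 = 2*k+5 from rfl]
  ring_nf


lemma N_nonneg (hν : ν > -(3/2)) {x : ℝ} (hx : 0 ≤ x) : 0 ≤ N ν x :=
  tsum_nonneg fun k => mul_nonneg (c_pos hν _).le (pow_nonneg hx _)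

lemma summable_Aseries (hν : ν > -(3/2)) (x : ℝ) :
    Summable (fun k => c ν (k+1) * x ^ (2*k+4) / (2*(k:ℝ)+4)) :=
  summable_shift hν x 4 (by norm_num) _
    (fun k => by have := Nat.cast_nonneg (α := ℝ) k; linarith)

lemma summable_Bseries (hν : ν > -(3/2)) (x : ℝ) :
    Summable (fun k => c ν (k+1) * x ^ (2*k+5) / ((2*(k:ℝ)+4) * (2*(k:ℝ)+5))) :=
  summable_shift hν x 5 (by norm_num) _
    (fun k => by have := Nat.cast_nonneg (α := ℝ) k; nlinarith)

lemma A_lower (hν : ν > -(3/2)) (m : ℕ) {x : ℝ} (hx : 0 ≤ x) :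
    c ν (m+1) * x ^ (2*m+4) / (2*(m:ℝ)+4) ≤ A ν x := by
  rw [A_eq hν hx]
  exact Summable.le_tsum (summable_Aseries hν x) m
    (fun k _ => by have := c_pos hν (k+1); positivity)

lemma B_lower (hν : ν > -(3/2)) (m : ℕ) {x : ℝ} (hx : 0 ≤ x) :
    c ν (m+1) * x ^ (2*m+5) / ((2*(m:ℝ)+4) * (2*(m:ℝ)+5)) ≤ B ν x := by
  rw [B_eq hν hx]
  refine Summable.le_tsum (summable_Bseries hν x) m (fun k _ => ?_)
  have hc := c_pos hν (k+1)
  have h4 : (0:ℝ) < 2*(k:ℝ)+4 := by positivity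
  have h5 : (0:ℝ) < 2*(k:ℝ)+5 := by positivity
  positivity

lemma pow_div_tendsto {f : ℝ → ℝ} {d : ℝ} (hd : 0 < d) {p j : ℕ} (hpj : j < p)
    (hf : ∀ x : ℝ, 1 ≤ x → d * x ^ p ≤ f x) :
    Tendsto (fun x => x ^ j / f x) atTop (𝓝 0) := by
  have h1 : Tendsto (fun x : ℝ => (x ^ (p-j))⁻¹) atTop (𝓝 0) := by
    have := (tendsto_pow_atTop (n := p - j) (α := ℝ) (by omega)).inv_tendsto_atTop
    exact this
  have hg : Tendsto (fun x : ℝ => (1/d) * (x ^ (p-j))⁻¹) atTop (𝓝 ((1/d) * 0)) :=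
    h1.const_mul _
  rw [mul_zero] at hg
  apply tendsto_of_tendsto_of_tendsto_of_le_of_le' tendsto_const_nhds hg
  · filter_upwards [eventually_ge_atTop (1:ℝ)] with x hx
    have hx0 : (0:ℝ) < x := by linarith
    exact div_nonneg (pow_nonneg hx0.le _) ((by positivity : (0:ℝ) < d * x ^ p).le.trans (hf x hx))
  · filter_upwards [eventually_ge_atTop (1:ℝ)] with x hx
    have hx0 : (0:ℝ) < x := by linarith
    have h1 : x ^ j / f x ≤ x ^ j / (d * x ^ p) :=
      div_le_div_of_nonneg_left (pow_nonneg hx0.le _) (by positivity) (hf x hx)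
    refine h1.trans_eq ?_
    rw [show p = (p - j) + j by omega, pow_add, Nat.add_sub_cancel]
    have hxj : x ^ j ≠ 0 := by positivity
    have hxpj : x ^ (p-j) ≠ 0 := by positivity
    field_simp

lemma tendsto_pow_div_A (hν : ν > -(3/2)) (j : ℕ) :
    Tendsto (fun x => x ^ j / A ν x) atTop (𝓝 0) := by
  have hc := c_pos hν (j+1)
  refine pow_div_tendsto (d := c ν (j+1) / (2*(j:ℝ)+4)) (by positivity) (p := 2*j+4)
    (by omega) (fun x hx => ?_)
  have := A_lower hν j (by linarith : (0:ℝ) ≤ x)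
  calc c ν (j+1) / (2*(j:ℝ)+4) * x ^ (2*j+4)
      = c ν (j+1) * x ^ (2*j+4) / (2*(j:ℝ)+4) := by ring
    _ ≤ A ν x := this

lemma tendsto_pow_div_B (hν : ν > -(3/2)) (j : ℕ) :
    Tendsto (fun x => x ^ j / B ν x) atTop (𝓝 0) := by
  have h4 : (0:ℝ) < 2*(j:ℝ)+4 := by positivity
  have h5 : (0:ℝ) < 2*(j:ℝ)+5 := by positivity
  have hc := c_pos hν (j+1)
  refine pow_div_tendsto (d := c ν (j+1) / ((2*(j:ℝ)+4) * (2*(j:ℝ)+5))) (by positivity)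
    (p := 2*j+5) (by omega) (fun x hx => ?_)
  have := B_lower hν j (by linarith : (0:ℝ) ≤ x)
  calc c ν (j+1) / ((2*(j:ℝ)+4) * (2*(j:ℝ)+5)) * x ^ (2*j+5)
      = c ν (j+1) * x ^ (2*j+5) / ((2*(j:ℝ)+4) * (2*(j:ℝ)+5)) := by ring
    _ ≤ B ν x := this

lemma B_atTop (hν : ν > -(3/2)) : Tendsto (B ν) atTop atTop := by
  have hd : (0:ℝ) < c ν 1 / ((2*(0:ℝ)+4) * (2*(0:ℝ)+5)) := by
    have := c_pos hν 1; positivity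
  apply tendsto_atTop_mono' _ _ ((tendsto_pow_atTop (n := 5) (by norm_num)).const_mul_atTop hd)
  filter_upwards [eventually_ge_atTop (0:ℝ)] with x hx
  have := B_lower hν 0 hx
  calc c ν 1 / ((2*(0:ℝ)+4) * (2*(0:ℝ)+5)) * x ^ 5
      = c ν (0+1) * x ^ (2*0+5) / ((2*((0:ℕ):ℝ)+4) * (2*((0:ℕ):ℝ)+5)) := by
        push_cast; ring_nf
    _ ≤ B ν x := this

lemma eventually_A_pos (hν : ν > -(3/2)) : ∀ᶠ x in atTop, 0 < A ν x := by
  filter_upwards [eventually_ge_atTop (1:ℝ)] with x hx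
  have h0 : (0:ℝ) ≤ x := by linarith
  refine lt_of_lt_of_le ?_ (A_lower hν 0 h0)
  have := c_pos hν 1
  have hxp : (0:ℝ) < x ^ (2*0+4) := by positivity
  positivity

lemma eventually_B_pos (hν : ν > -(3/2)) : ∀ᶠ x in atTop, 0 < B ν x := by
  filter_upwards [eventually_ge_atTop (1:ℝ)] with x hx
  have h0 : (0:ℝ) ≤ x := by linarith
  refine lt_of_lt_of_le ?_ (B_lower hν 0 h0)
  have := c_pos hν 1
  have hxp : (0:ℝ) < x ^ (2*0+5) := by positivity
  have h4 : (0:ℝ) < 2*((0:ℕ):ℝ)+4 := by norm_num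
  have h5 : (0:ℝ) < 2*((0:ℕ):ℝ)+5 := by norm_num
  positivity


noncomputable def acoef (ν : ℝ) (k : ℕ) : ℝ := c ν (k+2)
noncomputable def bcoef (ν : ℝ) (k : ℕ) : ℝ := c ν (k+1) / ((2*(k:ℝ)+4) * (2*(k:ℝ)+5))

lemma bcoef_pos (hν : ν > -(3/2)) (k : ℕ) : 0 < bcoef ν k := by
  have := c_pos hν (k+1)
  have h4 : (0:ℝ) < 2*(k:ℝ)+4 := by positivity
  have h5 : (0:ℝ) < 2*(k:ℝ)+5 := by positivity
  exact div_pos this (by positivity)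

lemma denom_pos (hν : ν > -(3/2)) (k : ℕ) : (0:ℝ) < 2*(k:ℝ)+2*ν+5 := by
  have := Nat.cast_nonneg (α := ℝ) k; linarith

lemma acoef_eq (hν : ν > -(3/2)) (k : ℕ) :
    acoef ν k = c ν (k+1) / ((2*(k:ℝ)+5) * (2*(k:ℝ)+2*ν+5)) := by
  have := c_succ hν (k+1)
  rw [acoef, show k+2 = (k+1)+1 from rfl, this]
  push_cast
  ring_nf

lemma diff_eq (hν : ν > -(3/2)) (k : ℕ) :
    bcoef ν k - acoef ν k = bcoef ν k * ((2*ν+1) / (2*(k:ℝ)+2*ν+5)) := by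
  have h4 : (0:ℝ) < 2*(k:ℝ)+4 := by positivity
  have h5 : (0:ℝ) < 2*(k:ℝ)+5 := by positivity
  have h7 := denom_pos hν k
  rw [acoef_eq hν, bcoef, div_sub_div _ _ (mul_pos h4 h5).ne' (mul_pos h5 h7).ne', div_mul_div_comm,
    div_eq_div_iff (mul_pos (mul_pos h4 h5) (mul_pos h5 h7)).ne' (mul_pos (mul_pos h4 h5) h7).ne']
  ring

lemma absdiff_eq (hν : ν > -(3/2)) (k : ℕ) :
    |bcoef ν k - acoef ν k| = bcoef ν k * (|2*ν+1| / (2*(k:ℝ)+2*ν+5)) := by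
  rw [diff_eq hν, abs_mul, abs_of_pos (bcoef_pos hν k), abs_div,
    abs_of_pos (denom_pos hν k)]

lemma summable_a (hν : ν > -(3/2)) (x : ℝ) :
    Summable (fun k => acoef ν k * x ^ (2*k+5)) := by
  apply ((summable_nat_add_iff 1).mpr (summable_N hν x)).congr
  intro k
  rw [show 2*(k+1)+3 = 2*k+5 from by omega]
  rfl

lemma summable_b (hν : ν > -(3/2)) (x : ℝ) :
    Summable (fun k => bcoef ν k * x ^ (2*k+5)) := by
  apply (summable_Bseries hν x).congr
  intro k
  rw [bcoef]
  ring

lemma N_split (hν : ν > -(3/2)) (x : ℝ) :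
    N ν x = c ν 1 * x ^ 3 + ∑' k, acoef ν k * x ^ (2*k+5) := by
  rw [N, Summable.tsum_eq_zero_add (summable_N hν x)]
  have h2 : ∀ k : ℕ, c ν (k+1+1) * x ^ (2*(k+1)+3) = acoef ν k * x ^ (2*k+5) := by
    intro k; rw [show 2*(k+1)+3 = 2*k+5 from by omega]; rfl
  rw [tsum_congr h2]

lemma B_eq' (hν : ν > -(3/2)) {x : ℝ} (hx : 0 ≤ x) :
    B ν x = ∑' k, bcoef ν k * x ^ (2*k+5) := by
  rw [B_eq hν hx]
  apply tsum_congr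
  intro k
  rw [bcoef]
  ring

lemma R1 (hν : ν > -(3/2)) : Tendsto (fun x => N ν x / B ν x) atTop (𝓝 1) := by
  rw [Metric.tendsto_nhds]
  intro ε hε
  have htend : Tendsto (fun k : ℕ => |2*ν+1| / (2*(k:ℝ)+2*ν+5)) atTop (𝓝 0) := by
    apply Tendsto.div_atTop tendsto_const_nhds
    have := tendsto_atTop_add_const_right atTop (2*ν+5)
      (Filter.Tendsto.const_mul_atTop two_pos (tendsto_natCast_atTop_atTop (R := ℝ)))
    apply this.congr; intro k; ring
  obtain ⟨K, hK⟩ := Filter.eventually_atTop.mp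
    (htend.eventually_le_const (by positivity : (0:ℝ) < ε/2))
  set C : ℝ := ∑ i ∈ Finset.range K, |bcoef ν i - acoef ν i| with hC
  have hsmall1 : ∀ᶠ x : ℝ in atTop, c ν 1 * (x ^ 3 / B ν x) < ε/4 :=
    (((tendsto_pow_div_B hν 3).const_mul (c ν 1)).mono_right
      (by rw [mul_zero] : 𝓝 (c ν 1 * 0) = 𝓝 0).le).eventually_lt_const (by positivity)
  have hsmall2 : ∀ᶠ x : ℝ in atTop, C * (x ^ (2*K+5) / B ν x) < ε/4 :=
    (((tendsto_pow_div_B hν (2*K+5)).const_mul C).mono_right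
      (by rw [mul_zero] : 𝓝 (C * 0) = 𝓝 0).le).eventually_lt_const (by positivity)
  filter_upwards [eventually_ge_atTop (1:ℝ), eventually_B_pos hν, hsmall1, hsmall2]
    with x hx1 hB h1 h2
  have hx0 : (0:ℝ) ≤ x := by linarith
  set T : ℝ := ∑' k, acoef ν k * x ^ (2*k+5) with hT
  have hsf : Summable (fun k => (bcoef ν k - acoef ν k) * x ^ (2*k+5)) := by
    apply ((summable_b hν x).sub (summable_a hν x)).congr
    intro k; ring
  have hsfabs : Summable (fun k => |(bcoef ν k - acoef ν k) * x ^ (2*k+5)|) := hsf.abs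
  have hdiff_eq : B ν x - T = ∑' k, (bcoef ν k - acoef ν k) * x ^ (2*k+5) := by
    rw [B_eq' hν hx0, hT, ← Summable.tsum_sub (summable_b hν x) (summable_a hν x)]
    apply tsum_congr; intro k; ring
  have habs_tsum : |B ν x - T| ≤ ∑' k, |(bcoef ν k - acoef ν k) * x ^ (2*k+5)| := by
    rw [hdiff_eq]
    calc |∑' k, (bcoef ν k - acoef ν k) * x ^ (2*k+5)|
        = ‖∑' k, (bcoef ν k - acoef ν k) * x ^ (2*k+5)‖ := (Real.norm_eq_abs _).symm
      _ ≤ ∑' k, ‖(bcoef ν k - acoef ν k) * x ^ (2*k+5)‖ :=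
          norm_tsum_le_tsum_norm (by simpa only [Real.norm_eq_abs] using hsfabs)
      _ = ∑' k, |(bcoef ν k - acoef ν k) * x ^ (2*k+5)| := by
          simp only [Real.norm_eq_abs]
  have hsplit := Summable.sum_add_tsum_nat_add (f := fun k => |(bcoef ν k - acoef ν k) * x ^ (2*k+5)|)
    K hsfabs
  have hhead : ∑ i ∈ Finset.range K, |(bcoef ν i - acoef ν i) * x ^ (2*i+5)|
      ≤ C * x ^ (2*K+5) := by
    rw [hC, Finset.sum_mul]
    apply Finset.sum_le_sum
    intro i hi
    rw [abs_mul, abs_pow, abs_of_nonneg hx0]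
    have hp : x ^ (2*i+5) ≤ x ^ (2*K+5) :=
      pow_le_pow_right₀ hx1 (by have := Finset.mem_range.mp hi; omega)
    have := abs_nonneg (bcoef ν i - acoef ν i)
    nlinarith
  have htail : ∑' i, |(bcoef ν (i+K) - acoef ν (i+K)) * x ^ (2*(i+K)+5)|
      ≤ (ε/2) * B ν x := by
    have step1 : ∑' i, |(bcoef ν (i+K) - acoef ν (i+K)) * x ^ (2*(i+K)+5)|
        ≤ ∑' i, (ε/2) * (bcoef ν (i+K) * x ^ (2*(i+K)+5)) := by
      have hs1 : Summable (fun i => |(bcoef ν (i+K) - acoef ν (i+K)) * x ^ (2*(i+K)+5)|) :=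
        (summable_nat_add_iff (f := fun k => |(bcoef ν k - acoef ν k) * x ^ (2*k+5)|) K).mpr
          hsfabs
      have hs2 : Summable (fun i => bcoef ν (i+K) * x ^ (2*(i+K)+5)) :=
        (summable_nat_add_iff (f := fun k => bcoef ν k * x ^ (2*k+5)) K).mpr (summable_b hν x)
      apply Summable.tsum_le_tsum _ hs1 (hs2.mul_left (ε/2))
      intro i
      have hKi := hK (i+K) (by omega)
      have hb := bcoef_pos hν (i+K)
      have hxp : (0:ℝ) ≤ x ^ (2*(i+K)+5) := by positivity
      rw [abs_mul, abs_pow, abs_of_nonneg hx0, absdiff_eq hν]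
      calc bcoef ν (i+K) * (|2*ν+1| / (2*((i+K:ℕ):ℝ)+2*ν+5)) * x ^ (2*(i+K)+5)
          ≤ bcoef ν (i+K) * (ε/2) * x ^ (2*(i+K)+5) := by
            apply mul_le_mul_of_nonneg_right _ hxp
            exact mul_le_mul_of_nonneg_left hKi hb.le
        _ = (ε/2) * (bcoef ν (i+K) * x ^ (2*(i+K)+5)) := by ring
    have step2 : ∑' i, (ε/2) * (bcoef ν (i+K) * x ^ (2*(i+K)+5))
        = (ε/2) * ∑' i, bcoef ν (i+K) * x ^ (2*(i+K)+5) :=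
          tsum_mul_left (a := ε/2) (f := fun i => bcoef ν (i+K) * x ^ (2*(i+K)+5))
    have step3 : ∑' i, bcoef ν (i+K) * x ^ (2*(i+K)+5) ≤ B ν x := by
      rw [B_eq' hν hx0]
      have hsplitB := Summable.sum_add_tsum_nat_add (f := fun k => bcoef ν k * x ^ (2*k+5))
        K (summable_b hν x)
      have hheadB : 0 ≤ ∑ i ∈ Finset.range K, bcoef ν i * x ^ (2*i+5) := by
        apply Finset.sum_nonneg
        intro i _
        have := bcoef_pos hν i
        positivity
      linarith
    calc ∑' i, |(bcoef ν (i+K) - acoef ν (i+K)) * x ^ (2*(i+K)+5)|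
        ≤ ∑' i, (ε/2) * (bcoef ν (i+K) * x ^ (2*(i+K)+5)) := step1
      _ = (ε/2) * ∑' i, bcoef ν (i+K) * x ^ (2*(i+K)+5) := step2
      _ ≤ (ε/2) * B ν x := mul_le_mul_of_nonneg_left step3 (by positivity)
  have hdiff_le : |B ν x - T| ≤ C * x ^ (2*K+5) + (ε/2) * B ν x := by
    refine habs_tsum.trans ?_
    rw [← hsplit]
    exact add_le_add hhead htail
  have hc1 := c_pos hν 1
  have hNx := N_split hν x
  have habs : |N ν x - B ν x| ≤ c ν 1 * x ^ 3 + (C * x ^ (2*K+5) + (ε/2) * B ν x) := by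
    have h3 : (0:ℝ) ≤ c ν 1 * x ^ 3 := by positivity
    have hTB := abs_le.mp hdiff_le
    rw [abs_le]
    constructor
    · nlinarith [hTB.1]
    · nlinarith [hTB.2]
  rw [Real.dist_eq]
  have heq : N ν x / B ν x - 1 = (N ν x - B ν x) / B ν x := by field_simp
  rw [heq, abs_div, abs_of_pos hB]
  calc |N ν x - B ν x| / B ν x
      ≤ (c ν 1 * x ^ 3 + (C * x ^ (2*K+5) + (ε/2) * B ν x)) / B ν x := by gcongr
    _ = c ν 1 * (x ^ 3 / B ν x) + C * (x ^ (2*K+5) / B ν x) + ε/2 := by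
        field_simp
        ring
    _ < ε/4 + ε/4 + ε/2 := by linarith
    _ = ε := by ring

lemma hasDerivAt_phi (hν : ν > -(3/2)) (d : ℝ) (y : ℝ) :
    HasDerivAt (fun y => d * (B ν y)^2 - (A ν y)^2)
      (2 * A ν y * (d * B ν y - N ν y)) y := by
  have hB2 : HasDerivAt (fun y => (B ν y)^2) (2 * B ν y * A ν y) y := by
    have := (hasDerivAt_B hν y).fun_pow 2
    simpa using this
  have hA2 : HasDerivAt (fun y => (A ν y)^2) (2 * A ν y * N ν y) y := by
    have := (hasDerivAt_A hν y).fun_pow 2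
    simpa using this
  have := (hB2.const_mul d).sub hA2
  exact this.congr_deriv (by ring)

lemma hasDerivAt_psi (hν : ν > -(3/2)) (d : ℝ) (y : ℝ) :
    HasDerivAt (fun y => (A ν y)^2 - d * (B ν y)^2)
      (2 * A ν y * (N ν y - d * B ν y)) y := by
  have := (hasDerivAt_phi hν d y).fun_neg
  have h2 : (fun y => -(d * (B ν y)^2 - (A ν y)^2))
      = fun y => (A ν y)^2 - d * (B ν y)^2 := by funext z; ring
  rw [h2] at this
  exact this.congr_deriv (by ring)

lemma mono_phi (hν : ν > -(3/2)) (d : ℝ) (T : ℝ)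
    (h : ∀ y ≥ T, 0 ≤ A ν y ∧ N ν y ≤ d * B ν y) :
    MonotoneOn (fun y => d * (B ν y)^2 - (A ν y)^2) (Set.Ici T) := by
  apply monotoneOn_of_deriv_nonneg (convex_Ici T)
  · exact ((continuous_const.mul ((continuous_B hν).pow 2)).sub
      ((continuous_A hν).pow 2)).continuousOn
  · intro y _
    exact (hasDerivAt_phi hν d y).differentiableAt.differentiableWithinAt
  · intro y hy
    rw [interior_Ici] at hy
    rw [(hasDerivAt_phi hν d y).deriv]
    obtain ⟨hA, hN⟩ := h y hy.le
    nlinarith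

lemma mono_psi (hν : ν > -(3/2)) (d : ℝ) (T : ℝ)
    (h : ∀ y ≥ T, 0 ≤ A ν y ∧ d * B ν y ≤ N ν y) :
    MonotoneOn (fun y => (A ν y)^2 - d * (B ν y)^2) (Set.Ici T) := by
  apply monotoneOn_of_deriv_nonneg (convex_Ici T)
  · exact (((continuous_A hν).pow 2).sub
      (continuous_const.mul ((continuous_B hν).pow 2))).continuousOn
  · intro y _
    exact (hasDerivAt_psi hν d y).differentiableAt.differentiableWithinAt
  · intro y hy
    rw [interior_Ici] at hy
    rw [(hasDerivAt_psi hν d y).deriv]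
    obtain ⟨hA, hN⟩ := h y hy.le
    nlinarith

lemma R2 (hν : ν > -(3/2)) : Tendsto (fun x => A ν x / B ν x) atTop (𝓝 1) := by
  have hsq : Tendsto (fun x => (A ν x / B ν x)^2) atTop (𝓝 1) := by
    rw [Metric.tendsto_nhds]
    intro ε hε
    set δ := ε/2 with hδdef
    have hδ : 0 < δ := by positivity
    have hNB : ∀ᶠ x : ℝ in atTop,
        ((1-δ) * B ν x ≤ N ν x ∧ N ν x ≤ (1+δ) * B ν x) ∧ 0 < B ν x ∧ 0 ≤ A ν x := by
      have h1 := Metric.tendsto_nhds.mp (R1 hν) δ hδ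
      filter_upwards [h1, eventually_B_pos hν, eventually_A_pos hν] with x hd hB hA
      rw [Real.dist_eq, abs_lt] at hd
      have e1 : N ν x / B ν x * B ν x = N ν x := by field_simp
      exact ⟨⟨by nlinarith [hd.1], by nlinarith [hd.2]⟩, hB, hA.le⟩
    obtain ⟨T, hT⟩ := Filter.eventually_atTop.mp hNB
    have hmono1 : MonotoneOn (fun y => (1+δ) * (B ν y)^2 - (A ν y)^2) (Set.Ici T) :=
      mono_phi hν (1+δ) T (fun y hy => ⟨(hT y hy).2.2, (hT y hy).1.2⟩)
    have hmono2 : MonotoneOn (fun y => (A ν y)^2 - (1-δ) * (B ν y)^2) (Set.Ici T) :=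
      mono_psi hν (1-δ) T (fun y hy => ⟨(hT y hy).2.2, (hT y hy).1.1⟩)
    set C1 : ℝ := (A ν T)^2 - (1+δ) * (B ν T)^2 with hC1
    set C2 : ℝ := (A ν T)^2 - (1-δ) * (B ν T)^2 with hC2
    set M : ℝ := |C1| + |C2| with hM
    have hBM : ∀ᶠ x : ℝ in atTop, M / (B ν x)^2 < δ := by
      have hB2atTop : Tendsto (fun x => (B ν x)^2) atTop atTop := by
        have := Filter.Tendsto.atTop_mul_atTop₀ (B_atTop hν) (B_atTop hν)
        apply this.congr
        intro x; rw [sq]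
      exact (Tendsto.div_atTop tendsto_const_nhds hB2atTop).eventually_lt_const hδ
    filter_upwards [eventually_ge_atTop T, hBM, eventually_B_pos hν] with x hx hMx hB
    have hkey1 : (A ν x)^2 ≤ (1+δ) * (B ν x)^2 + C1 := by
      have := hmono1 (Set.self_mem_Ici) (Set.mem_Ici.mpr hx) hx
      dsimp only at this
      simp only [hC1]
      linarith
    have hkey2 : (1-δ) * (B ν x)^2 + C2 ≤ (A ν x)^2 := by
      have := hmono2 (Set.self_mem_Ici) (Set.mem_Ici.mpr hx) hx
      dsimp only at this
      simp only [hC2]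
      linarith
    have hB2 : (0:ℝ) < (B ν x)^2 := by positivity
    rw [Real.dist_eq, div_pow]
    have heq : (A ν x)^2 / (B ν x)^2 - 1 = ((A ν x)^2 - (B ν x)^2) / (B ν x)^2 := by
      field_simp
    rw [heq, abs_div, abs_of_pos hB2]
    have habs : |(A ν x)^2 - (B ν x)^2| ≤ δ * (B ν x)^2 + M := by
      have h1 : C1 ≤ |C1| := le_abs_self _
      have h2 : -|C2| ≤ C2 := neg_abs_le _
      have h3 : (0:ℝ) ≤ |C1| := abs_nonneg _
      have h4 : (0:ℝ) ≤ |C2| := abs_nonneg _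
      rw [abs_le, hM]
      constructor <;> nlinarith
    calc |(A ν x)^2 - (B ν x)^2| / (B ν x)^2
        ≤ (δ * (B ν x)^2 + M) / (B ν x)^2 := by gcongr
      _ = δ + M / (B ν x)^2 := by field_simp
      _ < δ + δ := by linarith
      _ = ε := by rw [hδdef]; ring
  have h0 : Tendsto (fun x => |(A ν x / B ν x)^2 - 1|) atTop (𝓝 0) := by
    have := (hsq.sub (tendsto_const_nhds (x := (1:ℝ)))).abs
    simpa using this
  have habs : Tendsto (fun x => |A ν x / B ν x - 1|) atTop (𝓝 0) := by
    apply tendsto_of_tendsto_of_tendsto_of_le_of_le' tendsto_const_nhds h0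
    · filter_upwards with x using abs_nonneg _
    · filter_upwards [eventually_A_pos hν, eventually_B_pos hν] with x hA hB
      have hr : 0 ≤ A ν x / B ν x := by positivity
      set r := A ν x / B ν x with hrdef
      have hfac : r^2 - 1 = (r-1)*(r+1) := by ring
      rw [hfac, abs_mul]
      have h1 : (1:ℝ) ≤ |r+1| := by rw [abs_of_nonneg (by linarith)]; linarith
      nlinarith [abs_nonneg (r-1)]
  rw [tendsto_iff_dist_tendsto_zero]
  simpa [Real.dist_eq] using habs

lemma R3 (hν : ν > -(3/2)) : Tendsto (fun x => N ν x / A ν x) atTop (𝓝 1) := by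
  have h := (R1 hν).div (R2 hν) one_ne_zero
  rw [div_one] at h
  apply h.congr'
  filter_upwards [eventually_A_pos hν, eventually_B_pos hν] with x hA hB
  exact div_div_div_cancel_right₀ hB.ne' _ _

lemma c0_eq (hν : ν > -(3/2)) :
    c ν 0 = 1 / (Real.sqrt Real.pi * (2:ℝ) ^ ν * Real.Gamma (ν + 3/2)) := by
  have hG : 0 < Real.Gamma (ν + 3/2) := Gamma_pos_of_pos (by linarith)
  have hπ : 0 < Real.sqrt Real.pi := Real.sqrt_pos.mpr Real.pi_pos
  have h2 : (0:ℝ) < (2:ℝ) ^ ν := rpow_pos_of_pos two_pos ν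
  have e1 : c ν 0 = (1/2:ℝ) ^ (ν + 1) / (Real.Gamma (3/2) * Real.Gamma (ν + 3/2)) := by
    rw [c]
    norm_num
  have e2 : (1/2:ℝ) ^ (ν + 1) = ((2:ℝ) ^ ν)⁻¹ * (1/2) := by
    rw [rpow_add (by norm_num : (0:ℝ) < 1/2), rpow_one]
    congr 1
    rw [show (1/2:ℝ) = 2⁻¹ by norm_num, Real.inv_rpow (by norm_num : (0:ℝ) ≤ 2)]
  have e3 : Real.Gamma (3/2) = Real.sqrt Real.pi / 2 := by
    rw [show (3/2:ℝ) = 1/2 + 1 by norm_num, Real.Gamma_add_one (by norm_num),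
      Real.Gamma_one_half_eq]
    ring
  rw [e1, e2, e3]
  field_simp

lemma series_rep (hν : ν > -(3/2)) {x : ℝ} (hx : 0 < x) :
    x ^ (-ν) * modStruveL ν x = c ν 0 * x + N ν x := by
  have hmain : x ^ (-ν) * modStruveL ν x = ∑' k, c ν k * x ^ (2*k+1) := by
    rw [modStruveL, ← tsum_mul_left]
    apply tsum_congr
    intro k
    have hG1 : (0:ℝ) < Real.Gamma ((k:ℝ) + 3/2) := Gamma_pos_of_pos (arg1_pos k)
    have hG2 : (0:ℝ) < Real.Gamma ((k:ℝ) + ν + 3/2) := Gamma_pos_of_pos (arg2_pos hν k)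
    have hx2 : x / 2 = x * (1/2) := by ring
    have hpow : x ^ (-ν) * x ^ (ν + 2*(k:ℝ) + 1) = x ^ (2*k+1 : ℕ) := by
      rw [← Real.rpow_add hx, ← Real.rpow_natCast x (2*k+1)]
      congr 1
      push_cast
      ring
    rw [hx2, Real.mul_rpow hx.le (by norm_num : (0:ℝ) ≤ 1/2)]
    rw [c]
    field_simp
    rw [← hpow]
  rw [hmain, Summable.tsum_eq_zero_add (summable_odd hν x)]
  have h0 : c ν 0 * x ^ (2*0+1) = c ν 0 * x := by norm_num
  have h2 : ∀ k : ℕ, c ν (k+1) * x ^ (2*(k+1)+1) = c ν (k+1) * x ^ (2*k+3) := by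
    intro k; rw [show 2*(k+1)+1 = 2*k+3 from by omega]
  rw [h0, tsum_congr h2]
  rfl

lemma numerator_eq (hν : ν > -(3/2)) {x : ℝ} (hx : 0 < x) :
    x ^ (-ν) * modStruveL ν x -
      x / (Real.sqrt Real.pi * (2:ℝ) ^ ν * Real.Gamma (ν + 3/2)) = N ν x := by
  rw [series_rep hν hx, c0_eq hν]
  ring

lemma denominator_eq (hν : ν > -(3/2)) {x : ℝ} (hx : 0 ≤ x) :
    ∫ t in (0:ℝ)..x, t ^ (-ν) * modStruveL ν t = A ν x + c ν 0 * x^2 / 2 := by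
  have hEq : Set.EqOn (fun t : ℝ => t ^ (-ν) * modStruveL ν t)
      (fun t : ℝ => N ν t + c ν 0 * t) (Set.Ioc 0 x) := by
    intro t ht
    have := series_rep hν ht.1
    dsimp only
    rw [this]
    ring
  rw [intervalIntegral.integral_of_le hx,
    MeasureTheory.setIntegral_congr_fun measurableSet_Ioc hEq,
    ← intervalIntegral.integral_of_le hx,
    intervalIntegral.integral_add ((continuous_N hν).intervalIntegrable 0 x)
      (Continuous.intervalIntegrable (by continuity : Continuous (fun t : ℝ => c ν 0 * t)) 0 x)]
  have h1 : (∫ t in (0:ℝ)..x, c ν 0 * t) = c ν 0 * x^2/2 := by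
    rw [intervalIntegral.integral_const_mul]
    simp [integral_id]
    ring
  rw [h1]
  rfl

end StruveTight

theorem struve_lower_bound_tight_at_infinity (ν : ℝ) (hν : ν > -(3 / 2)) :
    Filter.Tendsto
      (fun x : ℝ =>
        (x ^ (-ν) * modStruveL ν x -
            x / (Real.sqrt Real.pi * (2 : ℝ) ^ ν * Real.Gamma (ν + 3 / 2))) /
          ∫ t in (0 : ℝ)..x, t ^ (-ν) * modStruveL ν t)
      Filter.atTop (nhds 1) := by
  have hν' : ν > -(3/2) := hν
  have hc0 := StruveTight.c_pos hν' 0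
  -- the limit of the model expression
  have hE : Filter.Tendsto (fun x : ℝ => StruveTight.c ν 0 * x^2 / (2 * StruveTight.A ν x))
      Filter.atTop (nhds 0) := by
    have h := (StruveTight.tendsto_pow_div_A hν' 2).const_mul (StruveTight.c ν 0 / 2)
    rw [mul_zero] at h
    apply h.congr
    intro x
    rw [div_mul_div_comm]
  have hden : Filter.Tendsto (fun x : ℝ => 1 + StruveTight.c ν 0 * x^2 / (2 * StruveTight.A ν x))
      Filter.atTop (nhds 1) := by
    have := tendsto_const_nhds (x := (1:ℝ)) (f := Filter.atTop (α := ℝ)) |>.add hE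
    simpa using this
  have hinv := hden.inv₀ (by norm_num)
  rw [inv_one] at hinv
  have hprod := (StruveTight.R3 hν').mul hinv
  rw [mul_one] at hprod
  apply hprod.congr'
  filter_upwards [Filter.eventually_gt_atTop (0:ℝ), StruveTight.eventually_A_pos hν']
    with x hx hA
  rw [StruveTight.numerator_eq hν' hx, StruveTight.denominator_eq hν' hx.le]
  have hd1 : (0:ℝ) < 1 + StruveTight.c ν 0 * x^2 / (2 * StruveTight.A ν x) := by positivity
  field_simp
end

section
/- Let ν > 1/2 and x > 0. Then L_ν(x) − a_{ν−1,0} x^{ν+1} < (x^{ν+1} / (√π · 2^ν · Γ(ν + 1/2))) · F(x²/4) < 2ν L_ν(x) − (2ν − 1) L_{ν+2}(x) + b_{ν−1,0} x^{ν+3} − c_{ν−1,0} x^{ν+1}, where F(y) = ₂F₃(1, 1; 3/2, 2, ν + 1/2; y). -/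
/-- The Pochhammer symbol `(a)_k = a (a+1) ⋯ (a+k-1)`. -/
noncomputable def poch (a : ℝ) (k : ℕ) : ℝ :=
  ∏ i ∈ Finset.range k, (a + (i : ℝ))

/-- The generalized hypergeometric function ₂F₃(1, 1; 3/2, 2, c; y). -/
noncomputable def hyp2F3 (c y : ℝ) : ℝ :=
  ∑' k : ℕ, (poch 1 k * poch 1 k / (poch (3 / 2) k * poch 2 k * poch c k)) *
    y ^ k / (Nat.factorial k : ℝ)



open Real

lemma poch_succ (a : ℝ) (k : ℕ) : poch a (k+1) = poch a k * (a + k) :=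
  Finset.prod_range_succ _ _

lemma poch_zero (a : ℝ) : poch a 0 = 1 := rfl

lemma poch_pos {a : ℝ} (ha : 0 < a) (k : ℕ) : 0 < poch a k :=
  Finset.prod_pos fun i _ => by positivity

lemma one_le_poch {a : ℝ} (ha : 1 ≤ a) (k : ℕ) : 1 ≤ poch a k := by
  induction k with
  | zero => simp [poch_zero]
  | succ n ih =>
    rw [poch_succ]
    have h1 : (0:ℝ) ≤ (n:ℝ) := Nat.cast_nonneg n
    nlinarith

lemma poch_le_poch {a b : ℝ} (ha : 0 < a) (hab : a ≤ b) (k : ℕ) :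
    poch a k ≤ poch b k := by
  unfold poch
  refine Finset.prod_le_prod (fun i _ => by positivity) (fun i _ => by linarith)

lemma poch_one (k : ℕ) : poch 1 k = (Nat.factorial k : ℝ) := by
  induction k with
  | zero => simp [poch_zero]
  | succ n ih => rw [poch_succ, ih, Nat.factorial_succ]; push_cast; ring

lemma poch_two (k : ℕ) : poch 2 k = ((k:ℝ) + 1) * (Nat.factorial k : ℝ) := by
  induction k with
  | zero => simp [poch_zero]
  | succ n ih => rw [poch_succ, ih, Nat.factorial_succ]; push_cast; ring

lemma Gamma_add_nat {a : ℝ} (ha : 0 < a) (k : ℕ) :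
    Real.Gamma (a + k) = poch a k * Real.Gamma a := by
  induction k with
  | zero => simp [poch_zero]
  | succ n ih =>
    have h1 : a + ((n:ℕ)+1 : ℕ) = (a + n) + 1 := by push_cast; ring
    have h2 : a + (n:ℝ) ≠ 0 := by positivity
    rw [h1, Real.Gamma_add_one h2, ih, poch_succ]; ring

noncomputable def uu (ν x : ℝ) (k : ℕ) : ℝ :=
  (x / 2) ^ (ν + 2 * (k : ℝ) + 1) /
    (Real.Gamma ((k : ℝ) + 3 / 2) * Real.Gamma ((k : ℝ) + ν + 3 / 2))

noncomputable def mm (ν x : ℝ) (k : ℕ) : ℝ :=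
  (x / 2) ^ (ν + 2 * (k : ℝ) + 1) /
    (((k : ℝ) + 1) * Real.Gamma ((k : ℝ) + 3 / 2) * Real.Gamma ((k : ℝ) + ν + 1 / 2))

lemma rpow_split {x : ℝ} (hx : 0 < x) (c : ℝ) (k : ℕ) :
    (x/2) ^ (c + 2*(k:ℝ)) = (x/2) ^ c * (x^2/4)^k := by
  rw [show c + 2*(k:ℝ) = c + ((2*k : ℕ) : ℝ) by push_cast; ring,
    Real.rpow_add (by positivity), Real.rpow_natCast, pow_mul]
  have : (x/2)^2 = x^2/4 := by ring
  rw [this]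

lemma summable_general {x : ℝ} (hx : 0 < x) (c a b : ℝ) (ha : 1 ≤ a) (hb : 1 ≤ b) :
    Summable (fun k : ℕ => (x/2) ^ (c + 2*(k:ℝ)) /
      (Real.Gamma ((k:ℝ) + a) * Real.Gamma ((k:ℝ) + b))) := by
  have ht : (0:ℝ) < x/2 := by positivity
  have hGa : (0:ℝ) < Real.Gamma a := Real.Gamma_pos_of_pos (by linarith)
  have hGb : (0:ℝ) < Real.Gamma b := Real.Gamma_pos_of_pos (by linarith)
  refine Summable.of_nonneg_of_le (fun k => ?_) (fun k => ?_)
    (((Real.summable_pow_div_factorial (x^2/4)).mul_left ((x/2)^c / (Real.Gamma a * Real.Gamma b))))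
  · have h1 : (0:ℝ) < Real.Gamma ((k:ℝ) + a) := Real.Gamma_pos_of_pos (by positivity)
    have h2 : (0:ℝ) < Real.Gamma ((k:ℝ) + b) := Real.Gamma_pos_of_pos (by positivity)
    positivity
  · have h1 : Real.Gamma ((k:ℝ) + a) = poch a k * Real.Gamma a := by
      rw [add_comm]; exact Gamma_add_nat (by linarith) k
    have h2 : Real.Gamma ((k:ℝ) + b) = poch b k * Real.Gamma b := by
      rw [add_comm]; exact Gamma_add_nat (by linarith) k
    have h3 : (Nat.factorial k : ℝ) ≤ poch a k := by
      rw [← poch_one]; exact poch_le_poch one_pos ha k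
    have h4 : (1:ℝ) ≤ poch b k := one_le_poch hb k
    have hfac : (0:ℝ) < (Nat.factorial k : ℝ) := by positivity
    have hrhs : (x/2)^c / (Real.Gamma a * Real.Gamma b) * ((x^2/4)^k / (Nat.factorial k : ℝ)) =
        ((x/2)^c * (x^2/4)^k) / ((Nat.factorial k : ℝ) * (Real.Gamma a * Real.Gamma b)) := by
      field_simp
    rw [rpow_split hx, h1, h2, hrhs]
    apply div_le_div_of_nonneg_left (by positivity) (by positivity)
    have hpa : (0:ℝ) < poch a k := poch_pos (by linarith) k
    have hpb : (0:ℝ) < poch b k := poch_pos (by linarith) k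
    have h5 : (Nat.factorial k : ℝ) * Real.Gamma a ≤ poch a k * Real.Gamma a :=
      mul_le_mul_of_nonneg_right h3 hGa.le
    have h6 : Real.Gamma b ≤ poch b k * Real.Gamma b := by nlinarith
    calc (Nat.factorial k : ℝ) * (Real.Gamma a * Real.Gamma b)
        = ((Nat.factorial k : ℝ) * Real.Gamma a) * Real.Gamma b := by ring
      _ ≤ (poch a k * Real.Gamma a) * (poch b k * Real.Gamma b) :=
          mul_le_mul h5 h6 hGb.le (by positivity)

section main
variable {ν x : ℝ}

lemma summable_uu (hν : ν > 1/2) (hx : 0 < x) : Summable (uu ν x) := by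
  refine (summable_general hx (ν+1) (3/2) (ν+3/2) (by norm_num) (by linarith)).congr fun k => ?_
  unfold uu
  rw [show ν+1+2*(k:ℝ) = ν+2*(k:ℝ)+1 by ring, show (k:ℝ)+(ν+3/2) = (k:ℝ)+ν+3/2 by ring]

lemma summable_vv (hν : ν > 1/2) (hx : 0 < x) : Summable (uu (ν+2) x) := by
  refine (summable_general hx (ν+3) (3/2) (ν+7/2) (by norm_num) (by linarith)).congr fun k => ?_
  unfold uu
  rw [show ν+3+2*(k:ℝ) = ν+2+2*(k:ℝ)+1 by ring, show (k:ℝ)+(ν+7/2) = (k:ℝ)+(ν+2)+3/2 by ring]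

lemma summable_mm (hν : ν > 1/2) (hx : 0 < x) : Summable (mm ν x) := by
  have hg := summable_general hx (ν+1) (3/2) (ν+1/2) (by norm_num) (by linarith)
  refine Summable.of_nonneg_of_le (fun k => ?_) (fun k => ?_) hg
  · unfold mm
    have h1 : (0:ℝ) < Real.Gamma ((k:ℝ)+3/2) := Real.Gamma_pos_of_pos (by positivity)
    have h2 : (0:ℝ) < Real.Gamma ((k:ℝ)+ν+1/2) := Real.Gamma_pos_of_pos (by positivity)
    positivity
  · unfold mm
    rw [show ν+1+2*(k:ℝ) = ν+2*(k:ℝ)+1 by ring, show (k:ℝ)+(ν+1/2) = (k:ℝ)+ν+1/2 by ring]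
    have h1 : (0:ℝ) < Real.Gamma ((k:ℝ)+3/2) := Real.Gamma_pos_of_pos (by positivity)
    have h2 : (0:ℝ) < Real.Gamma ((k:ℝ)+ν+1/2) := Real.Gamma_pos_of_pos (by positivity)
    apply div_le_div_of_nonneg_left (by positivity) (by positivity)
    nlinarith [mul_pos h1 h2, Nat.cast_nonneg (α := ℝ) k, mul_nonneg (Nat.cast_nonneg (α := ℝ) k) (mul_pos h1 h2).le]
end main

section main2
variable {ν x : ℝ}

lemma Gamma_three_halves : Real.Gamma (3/2) = Real.sqrt Real.pi / 2 := by
  rw [show (3/2:ℝ) = 1/2 + 1 by norm_num, Real.Gamma_add_one (by norm_num),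
    Real.Gamma_one_half_eq]
  ring

set_option maxHeartbeats 1000000 in
lemma term_eq (hν : ν > 1/2) (hx : 0 < x) (k : ℕ) :
    (x^(ν+1) / (Real.sqrt Real.pi * (2:ℝ)^ν * Real.Gamma (ν+1/2))) *
      ((poch 1 k * poch 1 k / (poch (3 / 2) k * poch 2 k * poch (ν+1/2) k)) *
        (x^2/4) ^ k / (Nat.factorial k : ℝ)) = mm ν x k := by
  unfold mm
  rw [show ν+2*(k:ℝ)+1 = (ν+1)+2*(k:ℝ) by ring, rpow_split hx,
    show (k:ℝ)+3/2 = 3/2 + (k:ℕ) by push_cast; ring]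
  rw [Gamma_add_nat (by norm_num : (0:ℝ) < 3/2) k]
  rw [show (k:ℝ)+ν+1/2 = (ν+1/2) + (k:ℕ) by push_cast; ring]
  rw [Gamma_add_nat (by linarith : (0:ℝ) < ν+1/2) k]
  rw [poch_one, poch_two, Gamma_three_halves]
  have hdiv : (x/2:ℝ)^(ν+1) = x^(ν+1)/(2:ℝ)^(ν+1) := by
    rw [Real.div_rpow hx.le (by norm_num : (0:ℝ) ≤ 2)]
  have h2 : (2:ℝ)^(ν+1) = (2:ℝ)^ν * 2 := by
    rw [Real.rpow_add_one (by norm_num : (2:ℝ) ≠ 0) ν]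
  rw [hdiv, h2]
  have hsp : Real.sqrt Real.pi ≠ 0 := by positivity
  have h2v : ((2:ℝ)^ν) ≠ 0 := by positivity
  have hGν : Real.Gamma (ν+1/2) ≠ 0 := (Real.Gamma_pos_of_pos (by linarith)).ne'
  have hp32 : poch (3/2) k ≠ 0 := (poch_pos (by norm_num) k).ne'
  have hpν : poch (ν+1/2) k ≠ 0 := (poch_pos (by linarith) k).ne'
  have hfk : (Nat.factorial k : ℝ) ≠ 0 := by positivity
  have hk1 : ((k:ℝ)+1) ≠ 0 := by positivity
  obtain ⟨K, hK, hKne⟩ : ∃ K:ℝ, ((k:ℝ)+1) = K ∧ K ≠ 0 := ⟨_, rfl, hk1⟩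
  rw [hK]
  field_simp

lemma hyp_eq (hν : ν > 1/2) (hx : 0 < x) :
    (x^(ν+1) / (Real.sqrt Real.pi * (2:ℝ)^ν * Real.Gamma (ν+1/2))) * hyp2F3 (ν+1/2) (x^2/4)
      = ∑' k, mm ν x k := by
  unfold hyp2F3
  rw [← tsum_mul_left]
  exact tsum_congr fun k => term_eq hν hx k

lemma uu_pos (hν : ν > 1/2) (hx : 0 < x) (k : ℕ) : 0 < uu ν x k := by
  unfold uu
  have h1 : (0:ℝ) < Real.Gamma ((k:ℝ)+3/2) := Real.Gamma_pos_of_pos (by positivity)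
  have h2 : (0:ℝ) < Real.Gamma ((k:ℝ)+ν+3/2) := Real.Gamma_pos_of_pos (by positivity)
  positivity

lemma mm_pos (hν : ν > 1/2) (hx : 0 < x) (k : ℕ) : 0 < mm ν x k := by
  unfold mm
  have h1 : (0:ℝ) < Real.Gamma ((k:ℝ)+3/2) := Real.Gamma_pos_of_pos (by positivity)
  have h2 : (0:ℝ) < Real.Gamma ((k:ℝ)+ν+1/2) := Real.Gamma_pos_of_pos (by positivity)
  positivity

lemma uu_le_mm (hν : ν > 1/2) (hx : 0 < x) (k : ℕ) : uu ν x k ≤ mm ν x k := by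
  unfold uu mm
  have h1 : (0:ℝ) < Real.Gamma ((k:ℝ)+3/2) := Real.Gamma_pos_of_pos (by positivity)
  have h2 : (0:ℝ) < Real.Gamma ((k:ℝ)+ν+1/2) := Real.Gamma_pos_of_pos (by positivity)
  rw [show (k:ℝ)+ν+3/2 = ((k:ℝ)+ν+1/2)+1 by ring,
    Real.Gamma_add_one (by positivity : (k:ℝ)+ν+1/2 ≠ 0)]
  apply div_le_div_of_nonneg_left (by positivity) (by positivity)
  nlinarith [mul_pos h1 h2, mul_nonneg (mul_pos h1 h2).le (by linarith : (0:ℝ) ≤ ν - 1/2)]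

lemma key_lt (hν : ν > 1/2) (hx : 0 < x) (j : ℕ) :
    mm ν x (j+1) + (2*ν-1) * uu (ν+2) x j < 2*ν * uu ν x (j+1) := by
  have hA : (0:ℝ) < Real.Gamma ((j:ℝ)+3/2) := Real.Gamma_pos_of_pos (by positivity)
  have hB : (0:ℝ) < Real.Gamma ((j:ℝ)+ν+3/2) := Real.Gamma_pos_of_pos (by positivity)
  have hT : (0:ℝ) < (x/2) ^ (ν+2*(j:ℝ)+3) := Real.rpow_pos_of_pos (by positivity) _
  set T : ℝ := (x/2) ^ (ν+2*(j:ℝ)+3) with hTdef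
  set A : ℝ := Real.Gamma ((j:ℝ)+3/2) with hAdef
  set B : ℝ := Real.Gamma ((j:ℝ)+ν+3/2) with hBdef
  set P : ℝ := T / (((j:ℝ)+2)*((j:ℝ)+3/2)*((j:ℝ)+ν+5/2)*((j:ℝ)+ν+3/2)*A*B) with hPdef
  have hj2 : (0:ℝ) < (j:ℝ)+2 := by positivity
  have hj32 : (0:ℝ) < (j:ℝ)+3/2 := by positivity
  have hn52 : (0:ℝ) < (j:ℝ)+ν+5/2 := by positivity
  have hn32 : (0:ℝ) < (j:ℝ)+ν+3/2 := by positivity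
  have hP : 0 < P := by rw [hPdef]; positivity
  have e1 : mm ν x (j+1) = P * (((j:ℝ)+ν+5/2)*((j:ℝ)+ν+3/2)) := by
    unfold mm
    rw [show ν+2*(((j:ℕ)+1:ℕ):ℝ)+1 = ν+2*(j:ℝ)+3 by push_cast; ring,
      show (((j:ℕ)+1:ℕ):ℝ)+3/2 = ((j:ℝ)+3/2)+1 by push_cast; ring,
      show (((j:ℕ)+1:ℕ):ℝ)+ν+1/2 = (j:ℝ)+ν+3/2 by push_cast; ring,
      show (((j:ℕ)+1:ℕ):ℝ)+1 = (j:ℝ)+2 by push_cast; ring,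
      Real.Gamma_add_one hj32.ne', hPdef, ← hTdef, ← hAdef, ← hBdef]
    field_simp
  have e2 : uu (ν+2) x j = P * (((j:ℝ)+2)*((j:ℝ)+3/2)) := by
    unfold uu
    rw [show ν+2+2*(j:ℝ)+1 = ν+2*(j:ℝ)+3 by ring,
      show (j:ℝ)+(ν+2)+3/2 = ((j:ℝ)+ν+5/2)+1 by ring,
      Real.Gamma_add_one hn52.ne',
      show (j:ℝ)+ν+5/2 = ((j:ℝ)+ν+3/2)+1 by ring,
      Real.Gamma_add_one hn32.ne', hPdef, ← hTdef, ← hAdef, ← hBdef]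
    rw [show ((j:ℝ)+ν+3/2+1) = (j:ℝ)+ν+5/2 by ring]
    field_simp
  have e3 : uu ν x (j+1) = P * (((j:ℝ)+2)*((j:ℝ)+ν+5/2)) := by
    unfold uu
    rw [show ν+2*(((j:ℕ)+1:ℕ):ℝ)+1 = ν+2*(j:ℝ)+3 by push_cast; ring,
      show (((j:ℕ)+1:ℕ):ℝ)+3/2 = ((j:ℝ)+3/2)+1 by push_cast; ring,
      show (((j:ℕ)+1:ℕ):ℝ)+ν+3/2 = ((j:ℝ)+ν+3/2)+1 by push_cast; ring,
      Real.Gamma_add_one hj32.ne', Real.Gamma_add_one hn32.ne',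
      hPdef, ← hTdef, ← hAdef, ← hBdef]
    field_simp
  rw [e1, e2, e3]
  have hD : (0:ℝ) < (ν^2-1/4)*(2*(j:ℝ)+3) := by
    apply mul_pos (by nlinarith) (by positivity)
  nlinarith [hD, hP, mul_pos hP hD]

lemma base_eq (hν : ν > 1/2) (hx : 0 < x) :
    mm ν x 0 + cConst (ν-1) 0 * x^(ν+1) = 2*ν*uu ν x 0 := by
  unfold mm uu cConst
  have hν12 : (0:ℝ) < ν+1/2 := by linarith
  rw [show ν+2*((0:ℕ):ℝ)+1 = ν+1 by push_cast; ring,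
    show ((0:ℕ):ℝ)+3/2 = 3/2 by push_cast; ring,
    show ((0:ℕ):ℝ)+ν+1/2 = ν+1/2 by push_cast; ring,
    show ((0:ℕ):ℝ)+ν+3/2 = (ν+1/2)+1 by push_cast; ring,
    show ((0:ℕ):ℝ)+1 = (1:ℝ) by push_cast; ring,
    show ν-1+0+1 = ν by ring,
    show ν-1+0+5/2 = (ν+1/2)+1 by ring,
    Real.Gamma_add_one hν12.ne', Gamma_three_halves]
  have hdiv : (x/2:ℝ)^(ν+1) = x^(ν+1)/((2:ℝ)^ν*2) := by
    rw [Real.div_rpow hx.le (by norm_num : (0:ℝ) ≤ 2),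
      Real.rpow_add_one (by norm_num : (2:ℝ) ≠ 0) ν]
  rw [hdiv]
  have hsp : Real.sqrt Real.pi ≠ 0 := by positivity
  have h2v : ((2:ℝ)^ν) ≠ 0 := by positivity
  have hGν : Real.Gamma (ν+1/2) ≠ 0 := (Real.Gamma_pos_of_pos hν12).ne'
  field_simp
  ring
end main2

section final
variable {ν x : ℝ}

lemma aConst_pos (hν : ν > 1/2) : 0 < aConst (ν-1) 0 := by
  unfold aConst
  rw [show ν-1+0+2 = ν+1 by ring, show ν-1+0+5/2 = ν+3/2 by ring]
  have h1 : (0:ℝ) < Real.Gamma (ν+3/2) := Real.Gamma_pos_of_pos (by linarith)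
  refine div_pos (by linarith) ?_
  refine mul_pos (mul_pos (mul_pos (mul_pos (Real.sqrt_pos.mpr Real.pi_pos)
    (Real.rpow_pos_of_pos two_pos _)) (by norm_num)) (by linarith)) h1

lemma bConst_pos (hν : ν > 1/2) : 0 < bConst (ν-1) 0 := by
  unfold bConst
  rw [show ν-1+0+4 = ν+3 by ring, show ν-1+0+9/2 = ν+7/2 by ring]
  have h1 : (0:ℝ) < Real.Gamma (ν+7/2) := Real.Gamma_pos_of_pos (by linarith)
  refine div_pos (by nlinarith) ?_
  refine mul_pos (mul_pos (mul_pos (mul_pos (mul_pos (Real.sqrt_pos.mpr Real.pi_pos)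
    (Real.rpow_pos_of_pos two_pos _)) (by norm_num)) (by norm_num)) (by linarith)) h1

theorem struve_hypergeometric_double_inequality' (hν : ν > 1 / 2) (hx : x > 0) :
    modStruveL ν x - aConst (ν - 1) 0 * x ^ (ν + 1) <
      (x ^ (ν + 1) / (Real.sqrt Real.pi * (2 : ℝ) ^ ν * Real.Gamma (ν + 1 / 2))) *
        hyp2F3 (ν + 1 / 2) (x ^ 2 / 4) ∧
    (x ^ (ν + 1) / (Real.sqrt Real.pi * (2 : ℝ) ^ ν * Real.Gamma (ν + 1 / 2))) *
        hyp2F3 (ν + 1 / 2) (x ^ 2 / 4) <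
      2 * ν * modStruveL ν x - (2 * ν - 1) * modStruveL (ν + 2) x +
        bConst (ν - 1) 0 * x ^ (ν + 3) - cConst (ν - 1) 0 * x ^ (ν + 1) := by
  have hL : modStruveL ν x = ∑' k, uu ν x k := rfl
  have hL2 : modStruveL (ν+2) x = ∑' k, uu (ν+2) x k := rfl
  have hmid := hyp_eq hν hx
  have hsm := summable_mm hν hx
  have hsu := summable_uu hν hx
  have hsv := summable_vv hν hx
  have hxp : (0:ℝ) < x ^ (ν+1) := Real.rpow_pos_of_pos hx _
  have hxp3 : (0:ℝ) < x ^ (ν+3) := Real.rpow_pos_of_pos hx _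
  constructor
  · have h1 : ∑' k, uu ν x k ≤ ∑' k, mm ν x k :=
      Summable.tsum_le_tsum (uu_le_mm hν hx) hsu hsm
    have ha : 0 < aConst (ν-1) 0 * x^(ν+1) := mul_pos (aConst_pos hν) hxp
    rw [hL, hmid]
    linarith
  · rw [hL, hL2, hmid, Summable.tsum_eq_zero_add hsm, Summable.tsum_eq_zero_add hsu]
    have hbase := base_eq hν hx
    have hsm' : Summable (fun k => mm ν x (k+1)) := (summable_nat_add_iff 1).mpr hsm
    have hsu' : Summable (fun k => uu ν x (k+1)) := (summable_nat_add_iff 1).mpr hsu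
    have hkey : ∑' k, (mm ν x (k+1) + (2*ν-1) * uu (ν+2) x k) <
        ∑' k, (2*ν) * uu ν x (k+1) := by
      refine Summable.tsum_lt_tsum_of_nonneg (fun k => ?_) (fun k => (key_lt hν hx k).le)
        (key_lt hν hx 0) (hsu'.mul_left _)
      have := mm_pos hν hx (k+1)
      have := uu_pos (by linarith : ν+2 > 1/2) hx k
      nlinarith
    have hsplit : ∑' k, (mm ν x (k+1) + (2*ν-1)*uu (ν+2) x k)
        = ∑' k, mm ν x (k+1) + (2*ν-1) * ∑' k, uu (ν+2) x k := by
      rw [Summable.tsum_add hsm' (hsv.mul_left _), tsum_mul_left]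
    have hsplit2 : ∑' k, (2*ν) * uu ν x (k+1) = (2*ν) * ∑' k, uu ν x (k+1) :=
      tsum_mul_left
    have hb : 0 < bConst (ν-1) 0 * x^(ν+3) := mul_pos (bConst_pos hν) hxp3
    rw [hsplit, hsplit2] at hkey
    linarith
end final

theorem struve_hypergeometric_double_inequality (ν x : ℝ) (hν : ν > 1 / 2) (hx : x > 0) :
    modStruveL ν x - aConst (ν - 1) 0 * x ^ (ν + 1) <
      (x ^ (ν + 1) / (Real.sqrt Real.pi * (2 : ℝ) ^ ν * Real.Gamma (ν + 1 / 2))) *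
        hyp2F3 (ν + 1 / 2) (x ^ 2 / 4) ∧
    (x ^ (ν + 1) / (Real.sqrt Real.pi * (2 : ℝ) ^ ν * Real.Gamma (ν + 1 / 2))) *
        hyp2F3 (ν + 1 / 2) (x ^ 2 / 4) <
      2 * ν * modStruveL ν x - (2 * ν - 1) * modStruveL (ν + 2) x +
        bConst (ν - 1) 0 * x ^ (ν + 3) - cConst (ν - 1) 0 * x ^ (ν + 1) :=
  struve_hypergeometric_double_inequality' hν hx
end

section
/- Let n > -1, ν > -(n+1)/2 and x > 0. Then the derivative of the function x ↦ x^{-ν} L_{ν+n+1}(x) at x equals ((n+1)/(2(ν+n+1))) x^{-ν} L_{ν+n}(x) + ((2ν+n+1)/(2(ν+n+1))) x^{-ν} L_{ν+n+2}(x) + (n+2) a_{ν,n} x^{n+1}. -/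
open Real


/-- generic series term of `x^(-ν) * modStruveL t x` -/
noncomputable def Tterm (t ν x : ℝ) (k : ℕ) : ℝ :=
  2 ^ (-(t + 2*(k:ℝ) + 1)) * x ^ (t - ν + 2*(k:ℝ) + 1) /
    (Real.Gamma ((k:ℝ) + 3/2) * Real.Gamma ((k:ℝ) + t + 3/2))

/-- derivative (in x) of `Tterm t ν x k` -/
noncomputable def Dterm (t ν x : ℝ) (k : ℕ) : ℝ :=
  2 ^ (-(t + 2*(k:ℝ) + 1)) * ((t - ν + 2*(k:ℝ) + 1) * x ^ (t - ν + 2*(k:ℝ) + 1 - 1)) /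
    (Real.Gamma ((k:ℝ) + 3/2) * Real.Gamma ((k:ℝ) + t + 3/2))

lemma struve_rep (t ν x : ℝ) (hx : 0 < x) :
    x ^ (-ν) * modStruveL t x = ∑' k : ℕ, Tterm t ν x k := by
  rw [modStruveL, ← tsum_mul_left]
  refine tsum_congr fun k => ?_
  rw [Tterm]
  have e1 : x ^ (t - ν + 2*(k:ℝ) + 1) = x ^ (-ν) * x ^ (t + 2*(k:ℝ) + 1) := by
    rw [← Real.rpow_add hx]; congr 1; ring
  rw [Real.div_rpow hx.le (by norm_num : (0:ℝ) ≤ 2), e1,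
    Real.rpow_neg (by norm_num : (0:ℝ) ≤ 2)]
  ring

lemma two_rpow_dec (b : ℝ) (k : ℕ) :
    (2:ℝ) ^ (-(b + 2*(k:ℝ) + 1)) = 2 ^ (-(b+1)) * ((1/4 : ℝ)) ^ k := by
  have h14 : ((2:ℝ) ^ ((-2 : ℝ))) = 1/4 := by
    rw [show (-2:ℝ) = ((-2:ℤ):ℝ) by norm_num, Real.rpow_intCast]
    norm_num
  calc (2:ℝ) ^ (-(b + 2*(k:ℝ) + 1)) = 2 ^ (-(b+1) + (-2)*(k:ℝ)) := by congr 1; ring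
  _ = 2 ^ (-(b+1)) * 2 ^ ((-2:ℝ)*(k:ℝ)) := Real.rpow_add (by norm_num) _ _
  _ = 2 ^ (-(b+1)) * ((2:ℝ) ^ ((-2:ℝ))) ^ k := by
      rw [Real.rpow_mul (by norm_num), Real.rpow_natCast]
  _ = 2 ^ (-(b+1)) * ((1/4 : ℝ)) ^ k := by rw [h14]

lemma base_rpow_dec (z e : ℝ) (hz : 0 < z) (k : ℕ) :
    z ^ (e + 2*(k:ℝ)) = z ^ e * (z*z) ^ k := by
  have h2 : z ^ ((2:ℝ)*(k:ℝ)) = (z*z) ^ k := by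
    rw [Real.rpow_mul hz.le, Real.rpow_natCast]
    congr 1
    rw [show (2:ℝ) = ((2:ℕ):ℝ) by norm_num, Real.rpow_natCast]; ring
  rw [Real.rpow_add hz, h2]


lemma myGamma_le_add_nat (t : ℝ) (ht : 1 ≤ t) : ∀ k : ℕ, Real.Gamma t ≤ Real.Gamma ((k : ℝ) + t) := by
  intro k
  induction k with
  | zero => simp
  | succ m ih =>
    have h1 : (0:ℝ) < (m:ℝ) + t := by positivity
    have : Real.Gamma ((↑(m+1) : ℝ) + t) = ((m:ℝ) + t) * Real.Gamma ((m:ℝ) + t) := by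
      push_cast
      rw [show (m:ℝ) + 1 + t = ((m:ℝ) + t) + 1 by ring, Real.Gamma_add_one h1.ne']
    rw [this]
    calc Real.Gamma t ≤ Real.Gamma ((m:ℝ) + t) := ih
    _ ≤ ((m:ℝ) + t) * Real.Gamma ((m:ℝ) + t) := by
        nlinarith [Real.Gamma_pos_of_pos h1, (by linarith : (1:ℝ) ≤ (m:ℝ) + t)]

lemma myGamma_lower (t : ℝ) (ht : 0 < t) (k : ℕ) :
    Real.Gamma t * min 1 t ≤ Real.Gamma ((k : ℝ) + t) := by
  have hG := Real.Gamma_pos_of_pos ht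
  cases k with
  | zero =>
    simpa using mul_le_of_le_one_right hG.le (min_le_left 1 t)
  | succ m =>
    have h1 : Real.Gamma (t + 1) ≤ Real.Gamma ((m:ℝ) + (t + 1)) :=
      myGamma_le_add_nat (t+1) (by linarith) m
    have h2 : Real.Gamma (t+1) = t * Real.Gamma t := Real.Gamma_add_one ht.ne'
    have : ((↑(m+1) : ℝ) + t) = (m:ℝ) + (t+1) := by push_cast; ring
    rw [this]
    calc Real.Gamma t * min 1 t ≤ Real.Gamma t * t := by
          exact mul_le_mul_of_nonneg_left (min_le_right 1 t) hG.le
    _ = Real.Gamma (t+1) := by rw [h2]; ring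
    _ ≤ _ := h1

lemma myGamma_fact (k : ℕ) : (k.factorial : ℝ) / 2 ≤ Real.Gamma ((k : ℝ) + 3/2) := by
  induction k with
  | zero =>
    have : Real.Gamma ((0:ℕ) + 3/2 : ℝ) = Real.sqrt π / 2 := by
      rw [show ((0:ℕ) + 3/2 : ℝ) = 1/2 + 1 by norm_num, Real.Gamma_add_one (by norm_num),
        Real.Gamma_one_half_eq]
      ring
    rw [this]
    have : (1:ℝ) ≤ Real.sqrt π := by
      rw [show (1:ℝ) = Real.sqrt 1 by simp]
      exact Real.sqrt_le_sqrt (by nlinarith [Real.pi_gt_three])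
    simp only [Nat.factorial_zero]
    push_cast
    linarith
  | succ m ih =>
    have h1 : (0:ℝ) < (m:ℝ) + 3/2 := by positivity
    have : Real.Gamma ((↑(m+1) : ℝ) + 3/2) = ((m:ℝ) + 3/2) * Real.Gamma ((m:ℝ) + 3/2) := by
      push_cast
      rw [show (m:ℝ) + 1 + 3/2 = ((m:ℝ) + 3/2) + 1 by ring, Real.Gamma_add_one h1.ne']
    rw [this]
    have hfact : (0:ℝ) ≤ (m.factorial : ℝ) := by positivity
    calc (((m+1).factorial : ℕ) : ℝ) / 2 = ((m:ℝ)+1) * ((m.factorial : ℝ)/2) := by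
          push_cast [Nat.factorial_succ]; ring
    _ ≤ ((m:ℝ) + 3/2) * ((m.factorial:ℝ)/2) := by nlinarith
    _ ≤ ((m:ℝ) + 3/2) * Real.Gamma ((m:ℝ) + 3/2) := by nlinarith

lemma mySummable (s a t : ℝ) (hs : 0 ≤ s) (ht : 0 < t) :
    Summable (fun k : ℕ => s ^ k * (a + 2 * (k:ℝ)) /
      (Real.Gamma ((k:ℝ) + 3/2) * Real.Gamma ((k:ℝ) + t))) := by
  have hc : (0:ℝ) < Real.Gamma t * min 1 t := by
    have := Real.Gamma_pos_of_pos ht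
    have : (0:ℝ) < min 1 t := lt_min one_pos ht
    positivity
  apply Summable.of_norm
  refine Summable.of_nonneg_of_le (fun k => norm_nonneg _) (fun k => ?_)
    ((Real.summable_pow_div_factorial (2*s)).mul_left ((|a| + 2) * (2 / (Real.Gamma t * min 1 t))))
  · 
    have hG1 : (0:ℝ) < Real.Gamma ((k:ℝ) + 3/2) := Real.Gamma_pos_of_pos (by positivity)
    have hG2 : (0:ℝ) < Real.Gamma ((k:ℝ) + t) := Real.Gamma_pos_of_pos (by positivity)
    have hfac : (0:ℝ) < (k.factorial : ℝ) := by positivity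
    have h2k : (k:ℝ) ≤ 2 ^ k := by
      exact_mod_cast (Nat.lt_two_pow_self (n := k)).le
    have habs : |a + 2*(k:ℝ)| ≤ (|a| + 2) * 2 ^ k := by
      have h1 : (1:ℝ) ≤ 2 ^ k := one_le_pow₀ (by norm_num)
      calc |a + 2*(k:ℝ)| ≤ |a| + 2*(k:ℝ) := by
            have := abs_nonneg a
            have hk0 : (0:ℝ) ≤ (k:ℝ) := Nat.cast_nonneg k
            calc |a + 2*(k:ℝ)| ≤ |a| + |2*(k:ℝ)| := abs_add_le _ _
            _ = |a| + 2*(k:ℝ) := by rw [abs_of_nonneg (show (0:ℝ) ≤ 2*(k:ℝ) by positivity)]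
      _ ≤ |a| * 2^k + 2 * 2^k := by nlinarith [abs_nonneg a]
      _ = (|a| + 2) * 2^k := by ring
    have hfG1 : (k.factorial : ℝ)/2 ≤ Real.Gamma ((k:ℝ) + 3/2) := myGamma_fact k
    have hlow : Real.Gamma t * min 1 t ≤ Real.Gamma ((k:ℝ) + t) := myGamma_lower t ht k
    rw [Real.norm_eq_abs, abs_div, abs_mul, abs_of_nonneg (pow_nonneg hs k),
      abs_of_pos (mul_pos hG1 hG2)]
    rw [div_le_iff₀ (mul_pos hG1 hG2)]
    have key : s ^ k * |a + 2*(k:ℝ)| ≤ s ^ k * ((|a|+2) * 2^k) :=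
      mul_le_mul_of_nonneg_left habs (pow_nonneg hs k)
    calc s ^ k * |a + 2*(k:ℝ)| ≤ s ^ k * ((|a|+2) * 2^k) := key
    _ = (|a|+2) * (2*s)^k := by rw [mul_pow]; ring
    _ = ((|a| + 2) * (2 / (Real.Gamma t * min 1 t)) * ((2*s)^k / (k.factorial:ℝ))) *
          (((k.factorial:ℝ)/2) * (Real.Gamma t * min 1 t)) := by
        field_simp
    _ ≤ ((|a| + 2) * (2 / (Real.Gamma t * min 1 t)) * ((2*s)^k / (k.factorial:ℝ))) *
          (Real.Gamma ((k:ℝ) + 3/2) * Real.Gamma ((k:ℝ) + t)) := by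
        apply mul_le_mul_of_nonneg_left _ (by positivity)
        exact mul_le_mul hfG1 hlow hc.le hG1.le

lemma summable_Tterm (t ν x : ℝ) (hx : 0 < x) (ht : 0 < t + 3/2) :
    Summable (fun k : ℕ => Tterm t ν x k) := by
  have hC : (0:ℝ) ≤ 2 ^ (-(t+1)) * x ^ (t - ν + 1) := by positivity
  apply Summable.of_norm
  refine Summable.of_nonneg_of_le (fun k => norm_nonneg _) (fun k => ?_)
    ((mySummable (x*x/4) 1 (t+3/2) (by positivity) ht).mul_left
      (2 ^ (-(t+1)) * x ^ (t - ν + 1)))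
  have hG1 : (0:ℝ) < Real.Gamma ((k:ℝ) + 3/2) := Real.Gamma_pos_of_pos (by positivity)
  have hG2 : (0:ℝ) < Real.Gamma ((k:ℝ) + t + 3/2) := by
    apply Real.Gamma_pos_of_pos; have : (0:ℝ) ≤ (k:ℝ) := Nat.cast_nonneg k; linarith
  have heq : Tterm t ν x k =
      (2 ^ (-(t+1)) * x ^ (t - ν + 1)) * ((x*x/4) ^ k /
        (Real.Gamma ((k:ℝ) + 3/2) * Real.Gamma ((k:ℝ) + t + 3/2))) := by
    rw [Tterm, two_rpow_dec,
      show t - ν + 2*(k:ℝ) + 1 = (t - ν + 1) + 2*(k:ℝ) by ring, base_rpow_dec x _ hx,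
      show (x*x/4 : ℝ) ^ k = (x*x)^k * (1/4:ℝ)^k by rw [← mul_pow]; congr 1; ring]
    ring
  have hpos : (0:ℝ) ≤ Tterm t ν x k := by
    rw [heq]; positivity
  rw [Real.norm_eq_abs, abs_of_nonneg hpos, heq]
  rw [show (2 ^ (-(t+1)) * x ^ (t - ν + 1)) * ((x*x/4) ^ k * (1 + 2*(k:ℝ)) /
        (Real.Gamma ((k:ℝ) + 3/2) * Real.Gamma ((k:ℝ) + (t+3/2)))) =
      (2 ^ (-(t+1)) * x ^ (t - ν + 1)) * (((x*x/4) ^ k /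
        (Real.Gamma ((k:ℝ) + 3/2) * Real.Gamma ((k:ℝ) + (t+3/2)))) * (1 + 2*(k:ℝ))) by ring]
  rw [show (k:ℝ) + (t+3/2) = (k:ℝ) + t + 3/2 by ring]
  have h1 : (1:ℝ) ≤ 1 + 2*(k:ℝ) := by
    have : (0:ℝ) ≤ (k:ℝ) := Nat.cast_nonneg k; linarith
  nlinarith [mul_le_mul_of_nonneg_left h1
    (show (0:ℝ) ≤ (2 ^ (-(t+1)) * x ^ (t - ν + 1)) * ((x*x/4) ^ k /
      (Real.Gamma ((k:ℝ) + 3/2) * Real.Gamma ((k:ℝ) + t + 3/2))) by positivity)]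

noncomputable def uBound (t ν R : ℝ) (k : ℕ) : ℝ :=
  (2 ^ (-(t+1)) * R ^ (t - ν)) * ((R*R/4) ^ k * ((t - ν + 1) + 2*(k:ℝ)) /
    (Real.Gamma ((k:ℝ)+3/2) * Real.Gamma ((k:ℝ)+(t+3/2))))

lemma summable_uBound (t ν R : ℝ) (hR : 0 < R) (ht : 0 < t + 3/2) :
    Summable (uBound t ν R) :=
  (mySummable (R*R/4) (t-ν+1) (t+3/2) (by positivity) ht).mul_left _

lemma Dterm_bound (t ν R : ℝ) (k : ℕ) (y : ℝ) (hy : 0 < y) (hyR : y ≤ R)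
    (he : 0 < t - ν) (ht : 0 < t + 3/2) : ‖Dterm t ν y k‖ ≤ uBound t ν R k := by
  have hk0 : (0:ℝ) ≤ (k:ℝ) := Nat.cast_nonneg k
  have hR : 0 < R := lt_of_lt_of_le hy hyR
  have hG1 : (0:ℝ) < Real.Gamma ((k:ℝ) + 3/2) := Real.Gamma_pos_of_pos (by positivity)
  have hG2 : (0:ℝ) < Real.Gamma ((k:ℝ) + t + 3/2) := Real.Gamma_pos_of_pos (by linarith)
  have hp : (0:ℝ) < t - ν + 2*(k:ℝ) + 1 := by linarith
  have hval : (0:ℝ) ≤ Dterm t ν y k := by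
    rw [Dterm]
    apply div_nonneg _ (mul_pos hG1 hG2).le
    have h1 : (0:ℝ) ≤ (2:ℝ) ^ (-(t + 2*(k:ℝ) + 1)) := by positivity
    have h2 : (0:ℝ) ≤ y ^ (t - ν + 2*(k:ℝ) + 1 - 1) := by positivity
    exact mul_nonneg h1 (mul_nonneg hp.le h2)
  have hueq : uBound t ν R k =
      2 ^ (-(t + 2*(k:ℝ) + 1)) * ((t - ν + 2*(k:ℝ) + 1) * R ^ (t - ν + 2*(k:ℝ) + 1 - 1)) /
        (Real.Gamma ((k:ℝ)+3/2) * Real.Gamma ((k:ℝ)+t+3/2)) := by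
    rw [uBound, two_rpow_dec,
      show t - ν + 2*(k:ℝ) + 1 - 1 = (t - ν) + 2*(k:ℝ) by ring,
      base_rpow_dec R _ hR,
      show (k:ℝ) + (t+3/2) = (k:ℝ) + t + 3/2 by ring,
      show (R*R/4 : ℝ)^k = (R*R)^k * (1/4:ℝ)^k by rw [← mul_pow]; congr 1; ring]
    ring
  rw [Real.norm_eq_abs, abs_of_nonneg hval, hueq, Dterm]
  have hyR' : y ^ (t - ν + 2*(k:ℝ) + 1 - 1) ≤ R ^ (t - ν + 2*(k:ℝ) + 1 - 1) :=
    Real.rpow_le_rpow hy.le hyR (by linarith)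
  refine (div_le_div_iff_of_pos_right (mul_pos hG1 hG2)).mpr ?_
  exact mul_le_mul_of_nonneg_left (mul_le_mul_of_nonneg_left hyR' hp.le) (by positivity)

lemma hasDerivAt_T (t ν x : ℝ) (hx : 0 < x) (he : 0 < t - ν) (ht : 0 < t + 3/2) :
    HasDerivAt (fun y : ℝ => ∑' k : ℕ, Tterm t ν y k) (∑' k : ℕ, Dterm t ν x k) x := by
  have hR : (0:ℝ) < x + 1 := by linarith
  have hxmem : x ∈ Set.Ioo (0:ℝ) (x+1) := ⟨hx, by linarith⟩
  refine hasDerivAt_tsum_of_isPreconnected (u := uBound t ν (x+1))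
    (g := fun k y => Tterm t ν y k) (g' := fun k y => Dterm t ν y k)
    (summable_uBound t ν (x+1) hR ht) isOpen_Ioo
    ((convex_Ioo _ _).isPreconnected) (fun k y hy => ?_) (fun k y hy => ?_)
    hxmem (summable_Tterm t ν x hx ht) hxmem
  · simp only [Tterm, Dterm]
    exact ((Real.hasDerivAt_rpow_const (Or.inl hy.1.ne')).const_mul _).div_const _
  · exact Dterm_bound t ν (x+1) k y hy.1 hy.2.le he ht

lemma summable_Dterm (t ν x : ℝ) (hx : 0 < x) (he : 0 < t - ν) (ht : 0 < t + 3/2) :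
    Summable (fun k : ℕ => Dterm t ν x k) :=
  Summable.of_norm <| (summable_uBound t ν x hx ht).of_nonneg_of_le
    (fun k => norm_nonneg _) (fun k => Dterm_bound t ν x k x hx le_rfl he ht)

lemma alg1 (e m ka kb a b c X Ga Gb : ℝ) (hGa : Ga ≠ 0) (hGb : Gb ≠ 0)
    (hka : ka ≠ 0) (hkb : kb ≠ 0) (hm : m ≠ 0) (hrel : e * m = a * kb + b * ka) :
    c * (e * X) / (ka * Ga * (kb * Gb)) =
      a/(2*m) * (c * 2 * X / (ka * Ga * Gb)) + b/(2*m) * (c * 2 * X / (Ga * (kb * Gb))) := by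
  field_simp
  linear_combination (c*X) * hrel

lemma alg0 (e m b32 a bb p X S G : ℝ) (hp : p ≠ 0) (hS : S ≠ 0) (hG : G ≠ 0)
    (hb : b32 ≠ 0) (hm : m ≠ 0) (he : e ≠ 0) (hrel : 2*e*m = 2*a*b32 + bb) :
    p * (e * X) / (S/2 * (b32 * G)) =
      a/(2*m) * (p * 2 * X / (S/2 * G)) + e * (bb / (S * p⁻¹ * e * m * (b32*G))) * X := by
  field_simp
  linear_combination X * hrel

set_option maxHeartbeats 1600000 in
lemma keyid (ν n x : ℝ) (k : ℕ) (hn : n > -1) (hν : ν > -((n+1)/2)) (hx : 0 < x) :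
    Dterm (ν+n+1) ν x (k+1) =
      ((n+1)/(2*(ν+n+1))) * Tterm (ν+n) ν x (k+1) +
      ((2*ν+n+1)/(2*(ν+n+1))) * Tterm (ν+n+2) ν x k := by
  have hk0 : (0:ℝ) ≤ (k:ℝ) := Nat.cast_nonneg k
  have hk32 : (0:ℝ) < (k:ℝ) + 3/2 := by linarith
  have hkb : (0:ℝ) < (k:ℝ) + ν + n + 5/2 := by linarith
  have hGa : (0:ℝ) < Real.Gamma ((k:ℝ) + 3/2) := Real.Gamma_pos_of_pos hk32
  have hGb : (0:ℝ) < Real.Gamma ((k:ℝ) + ν + n + 5/2) := Real.Gamma_pos_of_pos hkb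
  have hνn1 : (0:ℝ) < ν + n + 1 := by linarith
  have hkcast : ((k+1 : ℕ):ℝ) = (k:ℝ) + 1 := by push_cast; ring
  simp only [Dterm, Tterm, hkcast]
  have h2L : (2:ℝ) ^ (-((ν+n+1) + 2*((k:ℝ)+1) + 1)) = 2 ^ (-(ν+n+2*(k:ℝ)+4)) := by
    congr 1; ring
  have h2P : (2:ℝ) ^ (-((ν+n) + 2*((k:ℝ)+1) + 1)) = 2 ^ (-(ν+n+2*(k:ℝ)+4)) * 2 := by
    rw [show -((ν+n) + 2*((k:ℝ)+1) + 1) = -(ν+n+2*(k:ℝ)+4) + 1 by ring,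
      Real.rpow_add (by norm_num : (0:ℝ) < 2), Real.rpow_one]
  have h2Q : (2:ℝ) ^ (-((ν+n+2) + 2*(k:ℝ) + 1)) = 2 ^ (-(ν+n+2*(k:ℝ)+4)) * 2 := by
    rw [show -((ν+n+2) + 2*(k:ℝ) + 1) = -(ν+n+2*(k:ℝ)+4) + 1 by ring,
      Real.rpow_add (by norm_num : (0:ℝ) < 2), Real.rpow_one]
  have hxL : x ^ ((ν+n+1) - ν + 2*((k:ℝ)+1) + 1 - 1) = x ^ (n+2*(k:ℝ)+3) := by
    congr 1; ring
  have hxP : x ^ ((ν+n) - ν + 2*((k:ℝ)+1) + 1) = x ^ (n+2*(k:ℝ)+3) := by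
    congr 1; ring
  have hxQ : x ^ ((ν+n+2) - ν + 2*(k:ℝ) + 1) = x ^ (n+2*(k:ℝ)+3) := by
    congr 1; ring
  have hG1L : Real.Gamma ((k:ℝ)+1 + 3/2) = ((k:ℝ)+3/2) * Real.Gamma ((k:ℝ)+3/2) := by
    rw [show (k:ℝ)+1+3/2 = ((k:ℝ)+3/2)+1 by ring, Real.Gamma_add_one hk32.ne']
  have hG2L : Real.Gamma ((k:ℝ)+1 + (ν+n+1) + 3/2) =
      ((k:ℝ)+ν+n+5/2) * Real.Gamma ((k:ℝ)+ν+n+5/2) := by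
    rw [show (k:ℝ)+1+(ν+n+1)+3/2 = ((k:ℝ)+ν+n+5/2)+1 by ring, Real.Gamma_add_one hkb.ne']
  have hG2P : Real.Gamma ((k:ℝ)+1 + (ν+n) + 3/2) = Real.Gamma ((k:ℝ)+ν+n+5/2) := by
    congr 1; ring
  have hG2Q : Real.Gamma ((k:ℝ) + (ν+n+2) + 3/2) =
      ((k:ℝ)+ν+n+5/2) * Real.Gamma ((k:ℝ)+ν+n+5/2) := by
    rw [show (k:ℝ)+(ν+n+2)+3/2 = ((k:ℝ)+ν+n+5/2)+1 by ring, Real.Gamma_add_one hkb.ne']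
  rw [h2L, h2P, h2Q, hxL, hxP, hxQ, hG1L, hG2L, hG2P, hG2Q]
  have hcoef : (ν+n+1) - ν + 2*((k:ℝ)+1) + 1 = n + 2*(k:ℝ) + 4 := by ring
  rw [hcoef]
  exact alg1 (n+2*(k:ℝ)+4) (ν+n+1) ((k:ℝ)+3/2) ((k:ℝ)+ν+n+5/2) (n+1) (2*ν+n+1) _ _ _ _
    hGa.ne' hGb.ne' hk32.ne' hkb.ne' hνn1.ne' (by ring)

set_option maxHeartbeats 1600000 in
lemma keyzero (ν n x : ℝ) (hn : n > -1) (hν : ν > -((n+1)/2)) (hx : 0 < x) :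
    Dterm (ν+n+1) ν x 0 =
      ((n+1)/(2*(ν+n+1))) * Tterm (ν+n) ν x 0 + (n+2) * aConst ν n * x ^ (n+1) := by
  have hνn1 : (0:ℝ) < ν + n + 1 := by linarith
  have hb : (0:ℝ) < ν + n + 3/2 := by linarith
  have hGc : (0:ℝ) < Real.Gamma (ν+n+3/2) := Real.Gamma_pos_of_pos hb
  have hS : (0:ℝ) < Real.sqrt Real.pi := Real.sqrt_pos.2 Real.pi_pos
  have hP0 : (0:ℝ) < (2:ℝ) ^ (-(ν+n+2)) := Real.rpow_pos_of_pos (by norm_num) _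
  simp only [Dterm, Tterm, aConst, Nat.cast_zero]
  have h2L : (2:ℝ) ^ (-((ν+n+1) + 2*(0:ℝ) + 1)) = 2 ^ (-(ν+n+2)) := by congr 1; ring
  have h2P : (2:ℝ) ^ (-((ν+n) + 2*(0:ℝ) + 1)) = 2 ^ (-(ν+n+2)) * 2 := by
    rw [show -((ν+n) + 2*(0:ℝ) + 1) = -(ν+n+2) + 1 by ring,
      Real.rpow_add (by norm_num : (0:ℝ) < 2), Real.rpow_one]
  have h2A : (2:ℝ) ^ (ν+n+2) = ((2:ℝ) ^ (-(ν+n+2)))⁻¹ := by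
    rw [← Real.rpow_neg (by norm_num : (0:ℝ) ≤ 2)]; congr 1; ring
  have hxL : x ^ ((ν+n+1) - ν + 2*(0:ℝ) + 1 - 1) = x ^ (n+1) := by congr 1; ring
  have hxP : x ^ ((ν+n) - ν + 2*(0:ℝ) + 1) = x ^ (n+1) := by congr 1; ring
  have hg32 : Real.Gamma ((0:ℝ) + 3/2) = Real.sqrt Real.pi / 2 := by
    rw [show (0:ℝ)+3/2 = 1/2+1 by norm_num, Real.Gamma_add_one (by norm_num),
      Real.Gamma_one_half_eq]
    ring
  have hG2L : Real.Gamma ((0:ℝ) + (ν+n+1) + 3/2) = (ν+n+3/2) * Real.Gamma (ν+n+3/2) := by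
    rw [show (0:ℝ)+(ν+n+1)+3/2 = (ν+n+3/2)+1 by ring, Real.Gamma_add_one hb.ne']
  have hG2P : Real.Gamma ((0:ℝ) + (ν+n) + 3/2) = Real.Gamma (ν+n+3/2) := by
    congr 1; ring
  have hG5 : Real.Gamma (ν+n+5/2) = (ν+n+3/2) * Real.Gamma (ν+n+3/2) := by
    rw [show ν+n+5/2 = (ν+n+3/2)+1 by ring, Real.Gamma_add_one hb.ne']
  rw [h2L, h2P, h2A, hxL, hxP, hg32, hG2L, hG2P, hG5]
  have hcoef : (ν+n+1) - ν + 2*(0:ℝ) + 1 = n + 2 := by ring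
  rw [hcoef]
  have hn2 : (0:ℝ) < n + 2 := by linarith
  exact alg0 (n+2) (ν+n+1) (ν+n+3/2) (n+1) (2*ν+n+1) _ _ _ _
    hP0.ne' hS.ne' hGc.ne' hb.ne' hνn1.ne' hn2.ne' (by ring)

theorem struve_derivative_formula (ν n x : ℝ) (hn : n > -1) (hν : ν > -((n + 1) / 2))
    (hx : x > 0) :
    HasDerivAt (fun y : ℝ => y ^ (-ν) * modStruveL (ν + n + 1) y)
      (((n + 1) / (2 * (ν + n + 1))) * (x ^ (-ν) * modStruveL (ν + n) x) +
        ((2 * ν + n + 1) / (2 * (ν + n + 1))) * (x ^ (-ν) * modStruveL (ν + n + 2) x) +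
        (n + 2) * aConst ν n * x ^ (n + 1)) x := by
  have hνn1 : (0:ℝ) < ν + n + 1 := by linarith
  have he : (0:ℝ) < (ν + n + 1) - ν := by linarith
  have ht : (0:ℝ) < (ν + n + 1) + 3/2 := by linarith
  have htP : (0:ℝ) < (ν + n) + 3/2 := by linarith
  have htQ : (0:ℝ) < (ν + n + 2) + 3/2 := by linarith
  have hd : HasDerivAt (fun y : ℝ => ∑' k : ℕ, Tterm (ν+n+1) ν y k)
      (∑' k : ℕ, Dterm (ν+n+1) ν x k) x := hasDerivAt_T (ν+n+1) ν x hx he ht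
  have heq : (fun y : ℝ => y ^ (-ν) * modStruveL (ν+n+1) y) =ᶠ[nhds x]
      (fun y : ℝ => ∑' k : ℕ, Tterm (ν+n+1) ν y k) :=
    Filter.eventuallyEq_of_mem (Ioi_mem_nhds hx) (fun y hy => struve_rep (ν+n+1) ν y hy)
  have hd2 : HasDerivAt (fun y : ℝ => y ^ (-ν) * modStruveL (ν+n+1) y)
      (∑' k : ℕ, Dterm (ν+n+1) ν x k) x := hd.congr_of_eventuallyEq heq
  have hS : (∑' k : ℕ, Dterm (ν+n+1) ν x k) =
      ((n + 1) / (2 * (ν + n + 1))) * (x ^ (-ν) * modStruveL (ν + n) x) +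
        ((2 * ν + n + 1) / (2 * (ν + n + 1))) * (x ^ (-ν) * modStruveL (ν + n + 2) x) +
        (n + 2) * aConst ν n * x ^ (n + 1) := by
    have hsumD : Summable (fun k : ℕ => Dterm (ν+n+1) ν x k) :=
      summable_Dterm (ν+n+1) ν x hx he ht
    have hsumP : Summable (fun k : ℕ => Tterm (ν+n) ν x k) := summable_Tterm _ _ _ hx htP
    have hsumQ : Summable (fun k : ℕ => Tterm (ν+n+2) ν x k) := summable_Tterm _ _ _ hx htQ
    have hsumP1 : Summable (fun k : ℕ => Tterm (ν+n) ν x (k+1)) :=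
      (summable_nat_add_iff 1).2 hsumP
    rw [Summable.tsum_eq_zero_add hsumD]
    have h1 : (∑' k : ℕ, Dterm (ν+n+1) ν x (k+1)) =
        ∑' k : ℕ, (((n+1)/(2*(ν+n+1))) * Tterm (ν+n) ν x (k+1) +
          ((2*ν+n+1)/(2*(ν+n+1))) * Tterm (ν+n+2) ν x k) :=
      tsum_congr fun k => keyid ν n x k hn hν hx
    rw [h1, Summable.tsum_add (hsumP1.mul_left _) (hsumQ.mul_left _), tsum_mul_left, tsum_mul_left,
      keyzero ν n x hn hν hx]
    rw [struve_rep (ν+n) ν x hx, struve_rep (ν+n+2) ν x hx, Summable.tsum_eq_zero_add hsumP]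
    ring
  exact hS ▸ hd2
end
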